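/- arXiv:1707.06584 — 5 statements merged into one kernel-verified Lean document; each statement's English description precedes it below -/
import Mathlib

section
/- Let N be a positive trace-preserving linear map on matrices, with adjoint N† (with respect to the Hilbert–Schmidt inner product). For any density matrix ρ with ρ > 0 and N(ρ) > 0, the entropy change satisfies S(N(ρ)) − S(ρ) ≥ D(ρ ‖ N†(N(ρ))), where S is von Neumann entropy and D is quantum relative entropy. -/
open scoped Matrix Kronecker ComplexOrder

open Matrix in
noncomputable def matFun {n : Type*} [Fintype n] [DecidableEq n]
    (f : ℝ → ℝ) (A : Matrix n n ℂ) : Matrix n n ℂ :=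
  if hA : A.IsHermitian then
    (hA.eigenvectorUnitary : Matrix n n ℂ) *
      Matrix.diagonal (fun i => (f (hA.eigenvalues i) : ℂ)) *
      star (hA.eigenvectorUnitary : Matrix n n ℂ)
  else 0

noncomputable def matLog {n : Type*} [Fintype n] [DecidableEq n]
    (A : Matrix n n ℂ) : Matrix n n ℂ := matFun Real.log A

noncomputable def vnEntropy {n : Type*} [Fintype n] [DecidableEq n]
    (ρ : Matrix n n ℂ) : ℝ := -(Matrix.trace (ρ * matLog ρ)).re

noncomputable def relEnt {n : Type*} [Fintype n] [DecidableEq n]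
    (ρ σ : Matrix n n ℂ) : ℝ := (Matrix.trace (ρ * (matLog ρ - matLog σ))).re

noncomputable def matAbs {m n : Type*} [Fintype m] [Fintype n] [DecidableEq n]
    (A : Matrix m n ℂ) : Matrix n n ℂ := matFun Real.sqrt (Aᴴ * A)

noncomputable def traceNorm {m n : Type*} [Fintype m] [Fintype n] [DecidableEq n]
    (A : Matrix m n ℂ) : ℝ := (Matrix.trace (matAbs A)).re

noncomputable def schattenNorm {m n : Type*} [Fintype m] [Fintype n] [DecidableEq n]
    (p : ℝ) (A : Matrix m n ℂ) : ℝ :=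
  (Matrix.trace (matFun (fun x => x ^ p) (matAbs A))).re ^ (1 / p)

noncomputable def specSup {n : Type*} [Fintype n] [DecidableEq n]
    (A : Matrix n n ℂ) : ℝ :=
  if hA : A.IsHermitian then sSup (Set.range hA.eigenvalues) else 0

noncomputable def opNorm {m n : Type*} [Fintype m] [Fintype n] [DecidableEq n]
    (A : Matrix m n ℂ) : ℝ := specSup (matAbs A)


section helperlemmas

open Filter Real

lemma log_ratio_tendsto (a : ℝ) (ha : 0 < a) :
    Tendsto (fun t : ℝ => Real.log (a + t) - Real.log (1 + t)) atTop (nhds 0) := by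
  have h1 : Tendsto (fun t : ℝ => (a - 1) / (1 + t)) atTop (nhds 0) := by
    apply Tendsto.const_div_atTop
    exact tendsto_atTop_add_const_left _ 1 tendsto_id
  have h2 : Tendsto (fun t : ℝ => 1 + (a - 1) / (1 + t)) atTop (nhds 1) := by
    simpa using tendsto_const_nhds.add h1
  have h3 : Tendsto (fun t : ℝ => Real.log (1 + (a - 1) / (1 + t))) atTop (nhds 0) := by
    have := (Real.continuousAt_log (by norm_num : (1:ℝ) ≠ 0)).tendsto.comp h2
    simpa [Function.comp_def] using this
  apply h3.congr'
  filter_upwards [eventually_ge_atTop (0:ℝ)] with t ht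
  have h1t : (0:ℝ) < 1 + t := by linarith
  have hat : (0:ℝ) < a + t := by linarith
  rw [show 1 + (a - 1) / (1 + t) = (a + t) / (1 + t) by field_simp; ring]
  rw [Real.log_div (ne_of_gt hat) (ne_of_gt h1t)]

lemma scalar_key {ι κ : Type*} [Fintype ι] [Fintype κ]
    (lam : ι → ℝ) (c : ι → ℝ) (mu : κ → ℝ) (d : κ → ℝ)
    (hlam : ∀ i, 0 < lam i) (hmu : ∀ j, 0 < mu j)
    (hsum : ∑ i, c i = ∑ j, d j)
    (hkey : ∀ t : ℝ, 0 ≤ t → ∑ j, d j / (mu j + t) ≤ ∑ i, c i / (lam i + t)) :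
    ∑ i, c i * Real.log (lam i) ≤ ∑ j, d j * Real.log (mu j) := by
  set G : ℝ → ℝ := fun t => (∑ j, d j * Real.log (mu j + t)) - ∑ i, c i * Real.log (lam i + t)
    with hG
  have hderiv : ∀ t : ℝ, 0 ≤ t → HasDerivAt G
      ((∑ j, d j / (mu j + t)) - ∑ i, c i / (lam i + t)) t := by
    intro t ht
    apply HasDerivAt.sub
    · apply HasDerivAt.fun_sum
      intro j _
      have h1 : HasDerivAt (fun t : ℝ => mu j + t) 1 t := by
        simpa using (hasDerivAt_id t).const_add (mu j)
      have h2 : HasDerivAt (fun t : ℝ => Real.log (mu j + t)) (1 / (mu j + t)) t :=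
        h1.log (by have := hmu j; intro h; linarith [h])
      simpa [div_eq_mul_inv, mul_comm, mul_assoc, one_div] using h2.const_mul (d j)
    · apply HasDerivAt.fun_sum
      intro i _
      have h1 : HasDerivAt (fun t : ℝ => lam i + t) 1 t := by
        simpa using (hasDerivAt_id t).const_add (lam i)
      have h2 : HasDerivAt (fun t : ℝ => Real.log (lam i + t)) (1 / (lam i + t)) t :=
        h1.log (by have := hlam i; intro h; linarith [h])
      simpa [div_eq_mul_inv, mul_comm, mul_assoc, one_div] using h2.const_mul (c i)
  have hanti : AntitoneOn G (Set.Ici (0:ℝ)) := by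
    apply antitoneOn_of_deriv_nonpos (convex_Ici 0)
    · intro t ht
      exact (hderiv t ht).continuousAt.continuousWithinAt
    · intro t ht
      rw [interior_Ici] at ht
      exact (hderiv t (le_of_lt ht)).differentiableAt.differentiableWithinAt
    · intro t ht
      rw [interior_Ici] at ht
      rw [(hderiv t (le_of_lt ht)).deriv]
      have := hkey t (le_of_lt ht)
      linarith
  have hlim : Tendsto G atTop (nhds 0) := by
    have hG2 : ∀ t : ℝ, G t = (∑ j, d j * (Real.log (mu j + t) - Real.log (1 + t)))
        - ∑ i, c i * (Real.log (lam i + t) - Real.log (1 + t)) := by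
      intro t
      simp only [hG, mul_sub, Finset.sum_sub_distrib, ← Finset.sum_mul, hsum]
      ring
    rw [show (0:ℝ) = (∑ j, d j * 0) - ∑ i, c i * 0 by simp]
    apply Tendsto.congr (fun t => (hG2 t).symm)
    apply Tendsto.sub <;> apply tendsto_finset_sum <;> intro x _
    · exact (log_ratio_tendsto _ (hmu x)).const_mul _
    · exact (log_ratio_tendsto _ (hlam x)).const_mul _
  have h0 : ∀ t ∈ Set.Ici (0:ℝ), G t ≤ G 0 := fun t ht =>
    hanti Set.self_mem_Ici ht ht
  have : (0:ℝ) ≤ G 0 := by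
    apply le_of_tendsto hlim
    filter_upwards [eventually_ge_atTop (0:ℝ)] with t ht using h0 t ht
  simpa [hG] using this

open Matrix
open scoped ComplexOrder

variable {n : Type*} [Fintype n] [DecidableEq n]

lemma trace_ext {M M' : Matrix n n ℂ}
    (h : ∀ X : Matrix n n ℂ, Matrix.trace (M * X) = Matrix.trace (M' * X)) : M = M' := by
  ext a b
  have := h (Matrix.single b a 1)
  simpa [Matrix.trace, Matrix.mul_apply, Matrix.single, Matrix.diag, ite_and,
    Finset.sum_ite_eq, Finset.sum_ite_eq'] using this

lemma diagonal_eq_sum (d : n → ℂ) :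
    Matrix.diagonal d = ∑ i, d i • Matrix.single i i 1 := by
  ext a b
  rw [Matrix.sum_apply]
  by_cases h : a = b
  · subst h
    simp [Matrix.single, ite_and, Finset.sum_ite_eq']
  · simp [Matrix.diagonal_apply_ne _ h, Matrix.single, ite_and, h]

lemma psd_trace_nonneg {M : Matrix n n ℂ} (hM : M.PosSemidef) : 0 ≤ Matrix.trace M := by
  rw [Matrix.trace]
  apply Finset.sum_nonneg
  intro i _
  have := hM.dotProduct_mulVec_nonneg (Pi.single i 1)
  simpa [dotProduct, Matrix.mulVec, Pi.single_apply, Matrix.diag] using this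

open scoped MatrixOrder in
lemma psd_eq_conjTranspose_mul_self {Q : Matrix n n ℂ} (hQ : Q.PosSemidef) :
    ∃ S : Matrix n n ℂ, Q = Sᴴ * S := by
  obtain ⟨S, hS⟩ := CStarAlgebra.nonneg_iff_eq_star_mul_self.mp hQ.nonneg
  exact ⟨S, hS⟩

lemma psd_trace_mul_nonneg {P Q : Matrix n n ℂ} (hP : P.PosSemidef) (hQ : Q.PosSemidef) :
    0 ≤ Matrix.trace (P * Q) := by
  obtain ⟨S, hS⟩ := psd_eq_conjTranspose_mul_self hQ
  rw [hS, ← Matrix.mul_assoc, Matrix.trace_mul_cycle]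
  exact psd_trace_nonneg (hP.mul_mul_conjTranspose_same S)

lemma outer_psd (x : n → ℂ) : (Matrix.vecMulVec x (star x)).PosSemidef := by
  refine Matrix.PosSemidef.of_dotProduct_mulVec_nonneg ?_ ?_
  · ext a b
    simp [Matrix.vecMulVec, Matrix.conjTranspose_apply, mul_comm]
  · intro y
    have h1 : Matrix.vecMulVec x (star x) *ᵥ y = (star x ⬝ᵥ y) • x := by
      ext a
      simp only [Matrix.vecMulVec, Matrix.mulVec, dotProduct, Matrix.of_apply,
        Pi.smul_apply, smul_eq_mul, Finset.sum_mul]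
      exact Finset.sum_congr rfl fun i _ => by ring
    rw [h1]
    have h2 : star y ⬝ᵥ (star x ⬝ᵥ y) • x = (star x ⬝ᵥ y) * (star y ⬝ᵥ x) := by
      simp [dotProduct_smul, smul_eq_mul, mul_comm]
    rw [h2]
    have hconj : star y ⬝ᵥ x = star (star x ⬝ᵥ y) := by
      rw [star_dotProduct]
    rw [hconj]
    exact mul_star_self_nonneg _

lemma trace_mul_outer (M : Matrix n n ℂ) (x : n → ℂ) :
    Matrix.trace (M * Matrix.vecMulVec x (star x)) = star x ⬝ᵥ M *ᵥ x := by
  simp only [Matrix.trace, Matrix.diag, Matrix.mul_apply, Matrix.vecMulVec, Matrix.of_apply,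
    dotProduct, Matrix.mulVec, Finset.mul_sum, Pi.star_apply]
  apply Finset.sum_congr rfl
  intro a _
  apply Finset.sum_congr rfl
  intro b _
  ring

open Matrix
open scoped ComplexOrder

variable {n : Type*} [Fintype n] [DecidableEq n] {m : Type*} [Fintype m] [DecidableEq m]

lemma trace_mul_diagonal (G : Matrix n n ℂ) (f : n → ℂ) :
    Matrix.trace (G * Matrix.diagonal f) = ∑ i, G i i * f i := by
  simp [Matrix.trace, Matrix.diag, Matrix.mul_apply, Matrix.diagonal, Finset.sum_ite_eq]

lemma trace_mul_conj_diag (M : Matrix n n ℂ) (U : Matrix n n ℂ) (f : n → ℂ) :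
    Matrix.trace (M * (U * Matrix.diagonal f * star U)) =
      ∑ i, (star U * M * U) i i * f i := by
  rw [show M * (U * Matrix.diagonal f * star U) = (M * U * Matrix.diagonal f) * star U by
    simp only [Matrix.mul_assoc], Matrix.trace_mul_comm, ← Matrix.mul_assoc, ← Matrix.mul_assoc,
    trace_mul_diagonal]

lemma psd_conj_diag (U : Matrix n n ℂ) (f : n → ℝ) (hf : ∀ i, 0 ≤ f i) :
    (U * Matrix.diagonal (fun i => (f i : ℂ)) * star U).PosSemidef := by
  have hd : (Matrix.diagonal (fun i => (f i : ℂ))).PosSemidef := by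
    rw [Matrix.posSemidef_diagonal_iff]
    intro i
    rw [Complex.le_def]
    simp [hf i]
  simpa [Matrix.star_eq_conjTranspose] using hd.mul_mul_conjTranspose_same U

section maps

variable (N : Matrix n n ℂ →ₗ[ℂ] Matrix m m ℂ) (Nadj : Matrix m m ℂ →ₗ[ℂ] Matrix n n ℂ)
  (hadj : ∀ (X : Matrix n n ℂ) (Y : Matrix m m ℂ),
      Matrix.trace (Yᴴ * N X) = Matrix.trace ((Nadj Y)ᴴ * X))
  (hpos : ∀ A : Matrix n n ℂ, A.PosSemidef → (N A).PosSemidef)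

include hpos in
lemma map_isHermitian {H : Matrix n n ℂ} (hH : H.IsHermitian) : (N H).IsHermitian := by
  have hspec := hH.spectral_theorem
  set U : Matrix n n ℂ := (hH.eigenvectorUnitary : Matrix n n ℂ)
  have hdecomp : H = (U * Matrix.diagonal (fun i => ((max (hH.eigenvalues i) 0 : ℝ) : ℂ)) * star U)
      - (U * Matrix.diagonal (fun i => ((max (-(hH.eigenvalues i)) 0 : ℝ) : ℂ)) * star U) := by
    conv_lhs => rw [hspec, Unitary.conjStarAlgAut_apply]
    have hdd : (Matrix.diagonal fun i => ((max (hH.eigenvalues i) 0 : ℝ) : ℂ))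
        - (Matrix.diagonal fun i => ((max (-(hH.eigenvalues i)) 0 : ℝ) : ℂ))
        = Matrix.diagonal (RCLike.ofReal ∘ hH.eigenvalues) := by
      rw [Matrix.diagonal_sub]
      congr 1
      ext i
      simp only [Pi.sub_apply, Function.comp_apply, ← Complex.ofReal_sub,
        max_zero_sub_max_neg_zero_eq_self]
      rfl
    rw [← hdd, Matrix.mul_sub, Matrix.sub_mul]
  rw [hdecomp, map_sub]
  exact ((hpos _ (psd_conj_diag U _ (fun i => le_max_right _ _))).isHermitian).sub
    ((hpos _ (psd_conj_diag U _ (fun i => le_max_right _ _))).isHermitian)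

include hpos in
lemma map_conjTranspose (X : Matrix n n ℂ) : N (Xᴴ) = (N X)ᴴ := by
  set H1 : Matrix n n ℂ := (1/2 : ℂ) • (X + Xᴴ) with hH1
  set H2 : Matrix n n ℂ := (Complex.I/2 : ℂ) • (Xᴴ - X) with hH2
  have h1 : H1.IsHermitian := by
    rw [hH1]
    unfold Matrix.IsHermitian
    rw [Matrix.conjTranspose_smul, Matrix.conjTranspose_add,
      Matrix.conjTranspose_conjTranspose]
    rw [show star ((1:ℂ)/2) = 1/2 by norm_num [Complex.ext_iff]]
    rw [add_comm]
  have h2 : H2.IsHermitian := by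
    rw [hH2]
    unfold Matrix.IsHermitian
    rw [Matrix.conjTranspose_smul, Matrix.conjTranspose_sub,
      Matrix.conjTranspose_conjTranspose]
    rw [show star (Complex.I/2 : ℂ) = -(Complex.I/2) by norm_num [Complex.ext_iff]]
    rw [neg_smul, ← smul_neg, neg_sub]
  have hX : X = H1 + Complex.I • H2 := by
    rw [hH1, hH2, smul_smul]
    ext a b
    simp only [Matrix.add_apply, Matrix.smul_apply, Matrix.sub_apply, smul_eq_mul]
    have : Complex.I * (Complex.I/2) = -(1/2) := by
      rw [mul_div_assoc', Complex.I_mul_I]; norm_num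
    rw [this]
    ring
  have hXH : Xᴴ = H1 - Complex.I • H2 := by
    rw [hH1, hH2, smul_smul]
    ext a b
    simp only [Matrix.sub_apply, Matrix.smul_apply, Matrix.add_apply, smul_eq_mul]
    have : Complex.I * (Complex.I/2) = -(1/2) := by
      rw [mul_div_assoc', Complex.I_mul_I]; norm_num
    rw [this]
    ring
  have hR : (N X)ᴴ = (N H1)ᴴ - Complex.I • (N H2)ᴴ := by
    conv_lhs => rw [hX]
    rw [map_add, Matrix.conjTranspose_add, sub_eq_add_neg]
    congr 1
    rw [_root_.map_smul, Matrix.conjTranspose_smul,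
      show star (Complex.I : ℂ) = -Complex.I by simp, neg_smul]
  have hL : N (Xᴴ) = (N H1) - Complex.I • (N H2) := by
    conv_lhs => rw [hXH]
    rw [map_sub]
    congr 1
    exact _root_.map_smul N _ _
  rw [hL, hR, map_isHermitian N hpos h1, map_isHermitian N hpos h2]

include hadj hpos in
lemma adj_isHermitian {Y : Matrix m m ℂ} (hY : Y.IsHermitian) : (Nadj Y).IsHermitian := by
  unfold Matrix.IsHermitian
  apply trace_ext
  intro X
  have lhs : Matrix.trace ((Nadj Y)ᴴ * X) = Matrix.trace (Y * N X) := by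
    rw [← hadj X Y, hY]
  rw [lhs]
  symm
  calc Matrix.trace (Nadj Y * X)
      = star (Matrix.trace ((Nadj Y * X)ᴴ)) := by rw [Matrix.trace_conjTranspose, star_star]
    _ = star (Matrix.trace ((Nadj Y)ᴴ * Xᴴ)) := by
        rw [Matrix.conjTranspose_mul, Matrix.trace_mul_comm]
    _ = star (Matrix.trace (Yᴴ * N (Xᴴ))) := by rw [hadj]
    _ = star (Matrix.trace (Yᴴ * (N X)ᴴ)) := by rw [map_conjTranspose N hpos]
    _ = star (Matrix.trace ((N X * Y)ᴴ)) := by rw [Matrix.conjTranspose_mul]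
    _ = Matrix.trace (N X * Y) := by rw [Matrix.trace_conjTranspose, star_star]
    _ = Matrix.trace (Y * N X) := Matrix.trace_mul_comm _ _

include hadj hpos in
lemma adj_trace {Y : Matrix m m ℂ} (hY : Y.IsHermitian) (X : Matrix n n ℂ) :
    Matrix.trace (Nadj Y * X) = Matrix.trace (Y * N X) := by
  calc Matrix.trace (Nadj Y * X) = Matrix.trace ((Nadj Y)ᴴ * X) := by
        rw [adj_isHermitian N Nadj hadj hpos hY]
    _ = Matrix.trace (Yᴴ * N X) := (hadj X Y).symm
    _ = Matrix.trace (Y * N X) := by rw [hY]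

include hadj hpos in
lemma adj_psd {Y : Matrix m m ℂ} (hY : Y.PosSemidef) : (Nadj Y).PosSemidef := by
  refine Matrix.PosSemidef.of_dotProduct_mulVec_nonneg (adj_isHermitian N Nadj hadj hpos hY.isHermitian) ?_
  intro x
  rw [← trace_mul_outer, adj_trace N Nadj hadj hpos hY.isHermitian]
  exact psd_trace_mul_nonneg hY (hpos _ (outer_psd x))

include hadj hpos in
lemma adj_one (hTP : ∀ A : Matrix n n ℂ, Matrix.trace (N A) = Matrix.trace A) :
    Nadj (1 : Matrix m m ℂ) = 1 := by
  apply trace_ext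
  intro X
  rw [adj_trace N Nadj hadj hpos Matrix.isHermitian_one, Matrix.one_mul, hTP, Matrix.one_mul]

end maps

open Matrix
open scoped ComplexOrder

variable {n : Type*} [Fintype n] [DecidableEq n]

lemma dot_self_re_nonneg (w : n → ℂ) : 0 ≤ (star w ⬝ᵥ w).re := by
  simp only [dotProduct, Pi.star_apply, Complex.re_sum]
  apply Finset.sum_nonneg
  intro i _
  rw [show star (w i) * w i = ((Complex.normSq (w i) : ℂ)) by
    rw [Complex.star_def, mul_comm, Complex.mul_conj]]
  simp [Complex.normSq_nonneg]

lemma cs_core {Q : Matrix n n ℂ} (hQ : Q.PosSemidef) (a : ℝ) (ha : 0 < a) (v u : n → ℂ) :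
    2 * (star v ⬝ᵥ Q *ᵥ u).re ≤ a⁻¹ * (star v ⬝ᵥ Q *ᵥ v).re + a * (star u ⬝ᵥ Q *ᵥ u).re := by
  obtain ⟨S, hS⟩ := psd_eq_conjTranspose_mul_self hQ
  have key : ∀ w z : n → ℂ, star w ⬝ᵥ Q *ᵥ z = star (S *ᵥ w) ⬝ᵥ (S *ᵥ z) := by
    intro w z
    rw [hS, ← Matrix.mulVec_mulVec, Matrix.dotProduct_mulVec, ← Matrix.star_mulVec]
  rw [key v u, key v v, key u u]
  set x := S *ᵥ v
  set y := S *ᵥ u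
  have hz := dot_self_re_nonneg (x - (a : ℂ) • y)
  have hexp : star (x - (a:ℂ) • y) ⬝ᵥ (x - (a:ℂ) • y)
      = star x ⬝ᵥ x - (a:ℂ) * (star x ⬝ᵥ y) - (a:ℂ) * (star y ⬝ᵥ x)
        + ((a:ℂ) * a) * (star y ⬝ᵥ y) := by
    rw [show star (x - (a:ℂ) • y) = star x - (a:ℂ) • star y by
      ext i; simp [Complex.ext_iff]]
    rw [sub_dotProduct, dotProduct_sub, dotProduct_sub,
      smul_dotProduct, dotProduct_smul, dotProduct_smul,
      smul_dotProduct]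
    simp only [smul_eq_mul]
    ring
  rw [hexp] at hz
  have hconj : (star y ⬝ᵥ x).re = (star x ⬝ᵥ y).re := by
    rw [show star y ⬝ᵥ x = star (star x ⬝ᵥ y) by rw [star_dotProduct]]
    simp
  simp only [Complex.sub_re, Complex.add_re, Complex.mul_re, Complex.ofReal_re,
    Complex.ofReal_im, Complex.mul_im, zero_mul, mul_zero, sub_zero, zero_sub, add_zero] at hz
  rw [hconj] at hz
  have h2 : 2 * (a * (star x ⬝ᵥ y).re) ≤ (star x ⬝ᵥ x).re + a * a * (star y ⬝ᵥ y).re := by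
    nlinarith [hz]
  calc 2 * (star x ⬝ᵥ y).re = a⁻¹ * (2 * (a * (star x ⬝ᵥ y).re)) := by
        field_simp
      _ ≤ a⁻¹ * ((star x ⬝ᵥ x).re + a * a * (star y ⬝ᵥ y).re) :=
        mul_le_mul_of_nonneg_left h2 (inv_pos.mpr ha).le
      _ = a⁻¹ * (star x ⬝ᵥ x).re + a * (star y ⬝ᵥ y).re := by
        field_simp

lemma herm_dot_star {M : Matrix n n ℂ} (hM : M.IsHermitian) (x : n → ℂ) :
    star (star x ⬝ᵥ M *ᵥ x) = star x ⬝ᵥ M *ᵥ x := by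
  conv_rhs => rw [Matrix.dotProduct_mulVec, ← hM.eq, ← Matrix.star_mulVec,
    Matrix.star_dotProduct]

lemma psd_of_herm_re {M : Matrix n n ℂ} (hM : M.IsHermitian)
    (h : ∀ x, 0 ≤ (star x ⬝ᵥ M *ᵥ x).re) : M.PosSemidef := by
  refine Matrix.PosSemidef.of_dotProduct_mulVec_nonneg hM fun x => ?_
  rw [Complex.nonneg_iff]
  refine ⟨h x, ?_⟩
  have := congrArg Complex.im (herm_dot_star hM x)
  simp only [Complex.star_def, Complex.conj_im] at this
  linarith

lemma sum_mulVec {ι : Type*} [Fintype ι] (f : ι → Matrix n n ℂ) (u : n → ℂ) :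
    (∑ i, f i) *ᵥ u = ∑ i, (f i) *ᵥ u := by
  ext a
  simp only [Matrix.mulVec, dotProduct, Matrix.sum_apply, Finset.sum_apply,
    Finset.sum_mul]
  rw [Finset.sum_comm]

lemma dot_sum (x : n → ℂ) {ι : Type*} [Fintype ι] (w : ι → (n → ℂ)) :
    star x ⬝ᵥ (∑ i, w i) = ∑ i, star x ⬝ᵥ w i := by
  simp only [dotProduct, Finset.sum_apply, Finset.mul_sum, Pi.star_apply]
  rw [Finset.sum_comm]

lemma sum_psd_compare {ι : Type*} [Fintype ι] (Q : ι → Matrix n n ℂ)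
    (hQ : ∀ i, (Q i).PosSemidef) (a : ι → ℝ) (ha : ∀ i, 0 < a i)
    (hQsum : ∑ i, Q i = 1) (C : Matrix n n ℂ) (hC : C.IsHermitian)
    (hCXC : C * ((∑ i, ((a i : ℝ) : ℂ) • Q i) * C) = C) :
    ((∑ i, (((a i)⁻¹ : ℝ) : ℂ) • Q i) - C).PosSemidef := by
  set Y := ∑ i, (((a i)⁻¹ : ℝ) : ℂ) • Q i with hYdef
  set X := ∑ i, ((a i : ℝ) : ℂ) • Q i with hXdef
  have hherm : ∀ (g : ι → ℝ), (∑ i, ((g i : ℝ) : ℂ) • Q i).IsHermitian := by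
    intro g
    unfold Matrix.IsHermitian
    rw [Matrix.conjTranspose_sum]
    apply Finset.sum_congr rfl
    intro i _
    rw [Matrix.conjTranspose_smul, (hQ i).isHermitian.eq]
    congr 1
    simp
  have hYherm : Y.IsHermitian := hherm _
  apply psd_of_herm_re (hYherm.sub hC)
  intro x
  rw [Matrix.sub_mulVec, dotProduct_sub, Complex.sub_re, sub_nonneg]
  set u := C *ᵥ x with hu
  -- the summed Cauchy-Schwarz inequality
  have hsumineq : ∑ i, 2 * (star x ⬝ᵥ (Q i) *ᵥ u).re ≤
      ∑ i, ((a i)⁻¹ * (star x ⬝ᵥ (Q i) *ᵥ x).re + a i * (star u ⬝ᵥ (Q i) *ᵥ u).re) :=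
    Finset.sum_le_sum (fun i _ => cs_core (hQ i) _ (ha i) _ _)
  -- LHS sum identification
  have hlhs : ∑ i, 2 * (star x ⬝ᵥ (Q i) *ᵥ u).re = 2 * (star x ⬝ᵥ C *ᵥ x).re := by
    rw [← Finset.mul_sum, ← Complex.re_sum, ← dot_sum, ← _root_.sum_mulVec, hQsum,
      Matrix.one_mulVec, hu]
  -- Y sum identification
  have hY2 : ∀ (g : ι → ℝ) (z : n → ℂ),
      star z ⬝ᵥ (∑ i, ((g i : ℝ) : ℂ) • Q i) *ᵥ z = ∑ i, ((g i : ℝ):ℂ) * (star z ⬝ᵥ (Q i) *ᵥ z) := by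
    intro g z
    rw [_root_.sum_mulVec, dot_sum]
    apply Finset.sum_congr rfl
    intro i _
    rw [Matrix.smul_mulVec, dotProduct_smul, smul_eq_mul]
  have hYre : (star x ⬝ᵥ Y *ᵥ x).re = ∑ i, (a i)⁻¹ * (star x ⬝ᵥ (Q i) *ᵥ x).re := by
    rw [hYdef, hY2, Complex.re_sum]
    apply Finset.sum_congr rfl
    intro i _
    rw [Complex.re_ofReal_mul]
  have hXre : (star u ⬝ᵥ X *ᵥ u).re = ∑ i, a i * (star u ⬝ᵥ (Q i) *ᵥ u).re := by
    rw [hXdef, hY2, Complex.re_sum]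
    apply Finset.sum_congr rfl
    intro i _
    rw [Complex.re_ofReal_mul]
  -- u X u = x C x
  have hmid : star u ⬝ᵥ X *ᵥ u = star x ⬝ᵥ C *ᵥ x := by
    rw [hu, Matrix.star_mulVec, hC.eq, Matrix.mulVec_mulVec, ← Matrix.dotProduct_mulVec,
      Matrix.mulVec_mulVec, ← Matrix.mul_assoc]
    rw [show C * X * C = C * (X * C) by rw [Matrix.mul_assoc], hCXC]
  rw [Finset.sum_add_distrib, ← hYre, ← hXre, hmid, hlhs] at hsumineq
  linarith

section final

open Matrix Complex
open scoped ComplexOrder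

variable {n : Type*} [Fintype n] [DecidableEq n] {m : Type*} [Fintype m] [DecidableEq m]

lemma unitary_sandwich (U D : Matrix m m ℂ) (hU1 : star U * U = 1) :
    star U * (U * D * star U) * U = D := by
  calc star U * (U * D * star U) * U = (star U * U) * D * (star U * U) := by
        simp only [Matrix.mul_assoc]
    _ = D := by rw [hU1, Matrix.one_mul, Matrix.mul_one]

lemma psd_diag_re_nonneg {M : Matrix n n ℂ} (hM : M.PosSemidef) (i : n) :
    0 ≤ (M i i).re := by
  have := hM.dotProduct_mulVec_nonneg (Pi.single i 1)
  rw [Complex.nonneg_iff] at this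
  have h2 : star (Pi.single i 1 : n → ℂ) ⬝ᵥ M *ᵥ Pi.single i 1 = M i i := by
    simp [dotProduct, Matrix.mulVec, Pi.single_apply]
  rw [h2] at this
  exact this.1

lemma psd_diag_im_zero {M : Matrix n n ℂ} (hM : M.PosSemidef) (i : n) :
    (M i i).im = 0 := by
  have := hM.dotProduct_mulVec_nonneg (Pi.single i 1)
  rw [Complex.nonneg_iff] at this
  have h2 : star (Pi.single i 1 : n → ℂ) ⬝ᵥ M *ᵥ Pi.single i 1 = M i i := by
    simp [dotProduct, Matrix.mulVec, Pi.single_apply]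
  rw [h2] at this
  exact this.2.symm

lemma conj_diag_sum (U : Matrix m m ℂ) (g : m → ℂ) :
    U * Matrix.diagonal g * star U
      = ∑ i, g i • (U * Matrix.single i i 1 * star U) := by
  rw [diagonal_eq_sum, Finset.mul_sum, Finset.sum_mul]
  apply Finset.sum_congr rfl
  intro i _
  rw [Matrix.mul_smul, Matrix.smul_mul]

lemma proj_psd (U : Matrix m m ℂ) (hU1 : star U * U = 1) (i : m) :
    (U * Matrix.single i i 1 * star U).PosSemidef := by
  have h := Matrix.posSemidef_conjTranspose_mul_self (Matrix.single i i 1 * star U)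
  have he : (Matrix.single i i (1:ℂ) * star U)ᴴ * (Matrix.single i i 1 * star U)
      = U * Matrix.single i i 1 * star U := by
    rw [Matrix.conjTranspose_mul]
    have h1 : (Matrix.single i i (1:ℂ))ᴴ = Matrix.single i i 1 := by
      ext a b
      simp [Matrix.single, Matrix.conjTranspose_apply, and_comm]
    have h2 : (star U)ᴴ = U := by
      rw [Matrix.star_eq_conjTranspose, Matrix.conjTranspose_conjTranspose]
    rw [h1, h2]
    have h3 : Matrix.single i i (1:ℂ) * Matrix.single i i 1
        = Matrix.single i i 1 := by
      rw [Matrix.single_mul_single_same, one_mul]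
    calc U * Matrix.single i i 1 * (Matrix.single i i 1 * star U)
        = U * (Matrix.single i i 1 * Matrix.single i i 1) * star U := by
          simp only [Matrix.mul_assoc]
      _ = U * Matrix.single i i 1 * star U := by rw [h3]
  rwa [he] at h

lemma pos_trace_posdef_psd {P T : Matrix n n ℂ} (hP : P.PosDef) (hT : T.PosSemidef)
    (hTne : T ≠ 0) : 0 < Matrix.trace (P * T) := by
  obtain ⟨S, hS⟩ := psd_eq_conjTranspose_mul_self hT
  have hSne : S ≠ 0 := by
    intro h
    apply hTne
    rw [hS, h]
    simp
  obtain ⟨k, l, hkl⟩ : ∃ k l, S k l ≠ 0 := by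
    by_contra h
    push_neg at h
    exact hSne (by ext a b; simpa using h a b)
  have hcycle : Matrix.trace (P * T) = Matrix.trace (S * P * Sᴴ) := by
    rw [hS, ← Matrix.mul_assoc, Matrix.trace_mul_cycle]
  have hpsd : (S * P * Sᴴ).PosSemidef := hP.posSemidef.mul_mul_conjTranspose_same S
  have hdiag : ∀ j, (S * P * Sᴴ) j j = star (fun a => star (S j a)) ⬝ᵥ P *ᵥ (fun a => star (S j a)) := by
    intro j
    simp only [Matrix.mul_apply, Matrix.conjTranspose_apply, dotProduct, Matrix.mulVec,
      Pi.star_apply, star_star, Finset.sum_mul, Finset.mul_sum]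
    rw [Finset.sum_comm]
    exact Finset.sum_congr rfl fun a _ => Finset.sum_congr rfl fun b _ => by ring
  have hkpos : 0 < ((S * P * Sᴴ) k k).re := by
    rw [hdiag k]
    have hw : (fun a => star (S k a)) ≠ (0 : n → ℂ) := by
      intro h
      have := congrFun h l
      simp only [Pi.zero_apply, star_eq_zero] at this
      exact hkl this
    have := hP.re_dotProduct_pos hw
    simpa using this
  rw [hcycle, Complex.lt_def]
  constructor
  · rw [Matrix.trace, Complex.re_sum]
    apply Finset.sum_pos' (fun j _ => psd_diag_re_nonneg hpsd j)
    exact ⟨k, Finset.mem_univ k, hkpos⟩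
  · rw [Matrix.trace, Complex.im_sum]
    simp [psd_diag_im_zero hpsd]

end final

end helperlemmas

open Matrix Complex
open scoped ComplexOrder

set_option maxHeartbeats 1000000 in
theorem stmt_1 {n m : Type*} [Fintype n] [DecidableEq n] [Fintype m] [DecidableEq m]
    (N : Matrix n n ℂ →ₗ[ℂ] Matrix m m ℂ) (Nadj : Matrix m m ℂ →ₗ[ℂ] Matrix n n ℂ)
    (hadj : ∀ (X : Matrix n n ℂ) (Y : Matrix m m ℂ),
      Matrix.trace (Yᴴ * N X) = Matrix.trace ((Nadj Y)ᴴ * X))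
    (hpos : ∀ A : Matrix n n ℂ, A.PosSemidef → (N A).PosSemidef)
    (hTP : ∀ A : Matrix n n ℂ, Matrix.trace (N A) = Matrix.trace A)
    (ρ : Matrix n n ℂ) (hρ : ρ.PosDef) (hρ1 : Matrix.trace ρ = 1)
    (hNρ : (N ρ).PosDef) :
    vnEntropy (N ρ) - vnEntropy ρ ≥ relEnt ρ (Nadj (N ρ)) := by
  have hA : (N ρ).IsHermitian := hNρ.isHermitian
  set lam : m → ℝ := hA.eigenvalues with hlamdef
  set Umat : Matrix m m ℂ := (hA.eigenvectorUnitary : Matrix m m ℂ) with hUdef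
  have hU1 : star Umat * Umat = 1 := Unitary.coe_star_mul_self _
  have hU2 : Umat * star Umat = 1 := Unitary.coe_mul_star_self _
  have hspecA : N ρ = Umat * Matrix.diagonal (fun i => (lam i : ℂ)) * star Umat := by
    have h := hA.spectral_theorem
    rw [Unitary.conjStarAlgAut_apply] at h
    convert h using 3
    all_goals rfl
  have hdiagA : star Umat * (N ρ) * Umat = Matrix.diagonal (fun i => (lam i : ℂ)) := by
    rw [hspecA, unitary_sandwich _ _ hU1]
  set B : Matrix n n ℂ := Nadj (N ρ) with hBdef
  have hBpsd : B.PosSemidef := adj_psd N Nadj hadj hpos hNρ.posSemidef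
  have hB : B.IsHermitian := hBpsd.isHermitian
  set mu : n → ℝ := hB.eigenvalues with hmudef
  set Vmat : Matrix n n ℂ := (hB.eigenvectorUnitary : Matrix n n ℂ) with hVdef
  have hV1 : star Vmat * Vmat = 1 := Unitary.coe_star_mul_self _
  have hV2 : Vmat * star Vmat = 1 := Unitary.coe_mul_star_self _
  have hspecB : B = Vmat * Matrix.diagonal (fun j => (mu j : ℂ)) * star Vmat := by
    have h := hB.spectral_theorem
    rw [Unitary.conjStarAlgAut_apply] at h
    convert h using 3
    all_goals rfl
  -- B is positive definite
  have hBpd : B.PosDef := by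
    refine Matrix.PosDef.of_dotProduct_mulVec_pos hB fun x hx => ?_
    have h1 : star x ⬝ᵥ B *ᵥ x = Matrix.trace (N ρ * N (Matrix.vecMulVec x (star x))) := by
      rw [← trace_mul_outer, hBdef, adj_trace N Nadj hadj hpos hNρ.isHermitian]
    rw [h1]
    apply pos_trace_posdef_psd hNρ (hpos _ (outer_psd x))
    intro h0
    have htr0 : Matrix.trace (N (Matrix.vecMulVec x (star x))) = 0 := by rw [h0]; simp
    rw [hTP] at htr0
    have hpostr : 0 < (Matrix.trace (Matrix.vecMulVec x (star x))).re := by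
      simp only [Matrix.trace, Matrix.diag, Matrix.vecMulVec, Matrix.of_apply, Complex.re_sum,
        Pi.star_apply]
      have hterm : ∀ a, (x a * star (x a)).re = Complex.normSq (x a) := by
        intro a
        rw [Complex.star_def, Complex.mul_conj]
        simp
      obtain ⟨a0, ha0⟩ : ∃ a, x a ≠ 0 := by
        by_contra hc
        push_neg at hc
        exact hx (funext fun a => hc a)
      apply Finset.sum_pos' (fun a _ => by rw [hterm a]; exact Complex.normSq_nonneg _)
      exact ⟨a0, Finset.mem_univ a0, by rw [hterm a0]; exact Complex.normSq_pos.mpr ha0⟩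
    rw [htr0] at hpostr
    simp at hpostr
  have hmupos : ∀ j, 0 < mu j := fun j => hBpd.eigenvalues_pos j
  have hlampos : ∀ i, 0 < lam i := fun i => hNρ.eigenvalues_pos i
  -- the classical distributions
  set d : n → ℝ := fun j => ((star Vmat * ρ * Vmat) j j).re with hddef
  have hconjρ : (star Vmat * ρ * Vmat).PosSemidef := by
    rw [Matrix.star_eq_conjTranspose]
    exact hρ.posSemidef.conjTranspose_mul_mul_same Vmat
  have hd0 : ∀ j, 0 ≤ d j := fun j => psd_diag_re_nonneg hconjρ j
  -- projections and their images
  have hQpsd : ∀ i : m, (Nadj (Umat * Matrix.single i i 1 * star Umat)).PosSemidef :=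
    fun i => adj_psd N Nadj hadj hpos (proj_psd Umat hU1 i)
  have hPsum : ∑ i : m, Umat * Matrix.single i i 1 * star Umat = 1 := by
    calc ∑ i : m, Umat * Matrix.single i i 1 * star Umat
        = ∑ i : m, (1:ℂ) • (Umat * Matrix.single i i 1 * star Umat) := by simp
      _ = Umat * Matrix.diagonal (fun _ : m => (1:ℂ)) * star Umat := (conj_diag_sum _ _).symm
      _ = 1 := by rw [Matrix.diagonal_one, Matrix.mul_one, hU2]
  have hQsum : ∑ i : m, Nadj (Umat * Matrix.single i i 1 * star Umat) = 1 := by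
    rw [← map_sum, hPsum, adj_one N Nadj hadj hpos hTP]
  have hNadjdiag : ∀ f : m → ℝ,
      Nadj (Umat * Matrix.diagonal (fun i => ((f i : ℝ) : ℂ)) * star Umat)
        = ∑ i, ((f i : ℝ) : ℂ) • Nadj (Umat * Matrix.single i i 1 * star Umat) := by
    intro f
    rw [conj_diag_sum, map_sum]
    exact Finset.sum_congr rfl fun i _ => _root_.map_smul _ _ _
  -- trace identity (1)
  have hTrA : (Matrix.trace (N ρ * matLog (N ρ))).re = ∑ i, lam i * Real.log (lam i) := by
    have hLA : matLog (N ρ) = Umat * Matrix.diagonal (fun i => ((Real.log (lam i) : ℝ) : ℂ))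
        * star Umat := by
      simp only [matLog, matFun, dif_pos hA]
      rfl
    rw [hLA, trace_mul_conj_diag, Complex.re_sum]
    apply Finset.sum_congr rfl
    intro i _
    rw [hdiagA, Matrix.diagonal_apply_eq, ← Complex.ofReal_mul]
    simp
  -- trace identity (2)
  have hTrB : (Matrix.trace (ρ * matLog B)).re = ∑ j, d j * Real.log (mu j) := by
    have hLB : matLog B = Vmat * Matrix.diagonal (fun j => ((Real.log (mu j) : ℝ) : ℂ))
        * star Vmat := by
      simp only [matLog, matFun, dif_pos hB]
      rfl
    rw [hLB, trace_mul_conj_diag, Complex.re_sum]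
    apply Finset.sum_congr rfl
    intro j _
    rw [mul_comm ((star Vmat * ρ * Vmat) j j), Complex.re_ofReal_mul, hddef]
    ring
  -- sums agree
  have hsums : ∑ i, lam i = ∑ j, d j := by
    have h1 : ∑ i, lam i = (Matrix.trace ρ).re := by
      have htr : Matrix.trace (N ρ) = ∑ i, (lam i : ℂ) := by
        rw [hspecA, Matrix.trace_mul_cycle, hU1, Matrix.one_mul, Matrix.trace_diagonal]
      rw [← hTP ρ, htr, Complex.re_sum]
      simp
    have h2 : ∑ j, d j = (Matrix.trace ρ).re := by
      have htr : Matrix.trace (star Vmat * ρ * Vmat) = Matrix.trace ρ := by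
        rw [Matrix.trace_mul_cycle, hV2, Matrix.one_mul]
      have hrfl : Matrix.trace (star Vmat * ρ * Vmat) = ∑ j, (star Vmat * ρ * Vmat) j j := rfl
      rw [← htr, hrfl, Complex.re_sum]
    rw [h1, h2]
  -- the key resolvent inequality
  have hkey : ∀ t : ℝ, 0 ≤ t → ∑ j, d j / (mu j + t) ≤ ∑ i, lam i / (lam i + t) := by
    intro t ht
    have hlt : ∀ i, 0 < lam i + t := fun i => by linarith [hlampos i]
    have hmt : ∀ j, 0 < mu j + t := fun j => by linarith [hmupos j]
    set W : Matrix m m ℂ :=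
      Umat * Matrix.diagonal (fun i => (((lam i + t)⁻¹ : ℝ) : ℂ)) * star Umat with hWdef
    set Cm : Matrix n n ℂ :=
      Vmat * Matrix.diagonal (fun j => (((mu j + t)⁻¹ : ℝ) : ℂ)) * star Vmat with hCdef
    have hWpsd : W.PosSemidef := psd_conj_diag _ _ (fun i => (inv_pos.mpr (hlt i)).le)
    have hCpsd : Cm.PosSemidef := psd_conj_diag _ _ (fun j => (inv_pos.mpr (hmt j)).le)
    have collapse : ∀ (g h : n → ℂ),
        (Vmat * Matrix.diagonal g * star Vmat) * (Vmat * Matrix.diagonal h * star Vmat)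
          = Vmat * Matrix.diagonal (fun j => g j * h j) * star Vmat := by
      intro g h
      calc (Vmat * Matrix.diagonal g * star Vmat) * (Vmat * Matrix.diagonal h * star Vmat)
          = Vmat * Matrix.diagonal g * (star Vmat * Vmat) * Matrix.diagonal h * star Vmat := by
            simp only [Matrix.mul_assoc]
        _ = Vmat * (Matrix.diagonal g * Matrix.diagonal h) * star Vmat := by
            rw [hV1, Matrix.mul_one, Matrix.mul_assoc (Vmat * Matrix.diagonal g)]
            simp only [Matrix.mul_assoc]
        _ = Vmat * Matrix.diagonal (fun j => g j * h j) * star Vmat := by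
            rw [Matrix.diagonal_mul_diagonal]
    have hXeq : ∑ i, (((lam i + t : ℝ)) : ℂ) • Nadj (Umat * Matrix.single i i 1 * star Umat)
        = B + (t : ℂ) • 1 := by
      rw [← hNadjdiag (fun i => lam i + t)]
      have hdd : Matrix.diagonal (fun i => ((lam i + t : ℝ) : ℂ))
          = Matrix.diagonal (fun i => (lam i : ℂ)) + (t : ℂ) • (1 : Matrix m m ℂ) := by
        ext a b
        by_cases hab : a = b
        · subst hab
          simp [Matrix.diagonal_apply_eq, Matrix.one_apply_eq]
        · simp [Matrix.diagonal_apply_ne _ hab, Matrix.one_apply_ne hab]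
      have hUD : Umat * Matrix.diagonal (fun i => ((lam i + t : ℝ) : ℂ)) * star Umat
          = N ρ + (t : ℂ) • 1 := by
        rw [hdd, Matrix.mul_add, Matrix.add_mul, ← hspecA]
        congr 1
        rw [Matrix.mul_smul, Matrix.mul_one, Matrix.smul_mul, hU2]
      rw [hUD, map_add, _root_.map_smul, adj_one N Nadj hadj hpos hTP, hBdef]
    have hBt : B + (t : ℂ) • 1 = Vmat * Matrix.diagonal (fun j => ((mu j + t : ℝ) : ℂ))
        * star Vmat := by
      have hdd : Matrix.diagonal (fun j => ((mu j + t : ℝ) : ℂ))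
          = Matrix.diagonal (fun j => (mu j : ℂ)) + (t : ℂ) • (1 : Matrix n n ℂ) := by
        ext a b
        by_cases hab : a = b
        · subst hab
          simp [Matrix.diagonal_apply_eq, Matrix.one_apply_eq]
        · simp [Matrix.diagonal_apply_ne _ hab, Matrix.one_apply_ne hab]
      rw [hdd, Matrix.mul_add, Matrix.add_mul, ← hspecB]
      congr 1
      rw [Matrix.mul_smul, Matrix.mul_one, Matrix.smul_mul, hV2]
    have hCXC : Cm * ((∑ i, (((lam i + t : ℝ)) : ℂ)
        • Nadj (Umat * Matrix.single i i 1 * star Umat)) * Cm) = Cm := by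
      rw [hXeq, hBt, hCdef, collapse, collapse]
      congr 2
      congr 1
      funext j
      have hne : ((mu j + t : ℝ) : ℂ) ≠ 0 := by
        simp only [ne_eq, Complex.ofReal_eq_zero]
        exact (hmt j).ne'
      push_cast at hne ⊢
      field_simp
    have hcomp := sum_psd_compare (fun i => Nadj (Umat * Matrix.single i i 1 * star Umat))
      hQpsd (fun i => lam i + t) hlt hQsum Cm hCpsd.isHermitian hCXC
    have hYeq : Nadj W = ∑ i, (((lam i + t)⁻¹ : ℝ) : ℂ)
        • Nadj (Umat * Matrix.single i i 1 * star Umat) := hNadjdiag _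
    rw [← hYeq] at hcomp
    have htrpos := psd_trace_mul_nonneg hρ.posSemidef hcomp
    rw [Matrix.mul_sub, Matrix.trace_sub, Complex.nonneg_iff] at htrpos
    have htrA : (Matrix.trace (ρ * Nadj W)).re = ∑ i, lam i * (lam i + t)⁻¹ := by
      rw [Matrix.trace_mul_comm, adj_trace N Nadj hadj hpos hWpsd.isHermitian]
      have hsand : star Umat * W * Umat = Matrix.diagonal (fun i => (((lam i + t)⁻¹ : ℝ) : ℂ)) := by
        rw [hWdef, unitary_sandwich _ _ hU1]
      rw [hspecA, trace_mul_conj_diag, Complex.re_sum]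
      apply Finset.sum_congr rfl
      intro i _
      rw [hsand, Matrix.diagonal_apply_eq, ← Complex.ofReal_mul]
      rw [Complex.ofReal_re]
      ring
    have htrC : (Matrix.trace (ρ * Cm)).re = ∑ j, d j * (mu j + t)⁻¹ := by
      rw [hCdef, trace_mul_conj_diag, Complex.re_sum]
      apply Finset.sum_congr rfl
      intro j _
      rw [mul_comm ((star Vmat * ρ * Vmat) j j), Complex.re_ofReal_mul, hddef]
      ring
    have hfin : ∑ j, d j * (mu j + t)⁻¹ ≤ ∑ i, lam i * (lam i + t)⁻¹ := by
      rw [← htrA, ← htrC]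
      have := htrpos.1
      rw [Complex.sub_re] at this
      linarith
    calc ∑ j, d j / (mu j + t) = ∑ j, d j * (mu j + t)⁻¹ := by
          apply Finset.sum_congr rfl
          intro j _
          rw [div_eq_mul_inv]
      _ ≤ ∑ i, lam i * (lam i + t)⁻¹ := hfin
      _ = ∑ i, lam i / (lam i + t) := by
          apply Finset.sum_congr rfl
          intro i _
          rw [div_eq_mul_inv]
  -- the scalar inequality
  have hmain := scalar_key lam lam mu d hlampos hmupos hsums hkey
  -- assemble the goal
  rw [ge_iff_le, vnEntropy, vnEntropy, relEnt, Matrix.mul_sub, Matrix.trace_sub, Complex.sub_re]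
  rw [← hBdef] at *
  linarith [hTrA, hTrB, hmain]
end

section
/- Let N be a positive, sub-unital, trace-preserving linear map on matrices. Then for every density matrix ρ > 0 with N(ρ) > 0, the von Neumann entropy is non-decreasing: S(N(ρ)) ≥ S(ρ). -/
open scoped Matrix Kronecker ComplexOrder

section Aux

open Matrix

variable {n : Type*} [Fintype n] [DecidableEq n]

private lemma aux_trace_stdBasis_mul (i : n) (M : Matrix n n ℂ) :
    Matrix.trace (Matrix.single i i (1:ℂ) * M) = M i i := by
  classical
  rw [Matrix.trace]
  rw [Finset.sum_eq_single i]
  · simp [Matrix.diag, Matrix.single_mul_apply_same]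
  · intro k _ hk
    exact Matrix.single_mul_apply_of_ne (c := (1:ℂ)) i i k k hk M
  · simp

private lemma aux_diagonal_eq_sum (d : n → ℂ) :
    Matrix.diagonal d = ∑ i, d i • Matrix.single i i (1:ℂ) := by
  ext k l
  simp only [Matrix.diagonal_apply, Matrix.sum_apply, Matrix.smul_apply,
    Matrix.single, Matrix.of_apply, smul_eq_mul, mul_ite, mul_one, mul_zero]
  by_cases h : k = l
  · subst h; simp
  · rw [if_neg h, Finset.sum_eq_zero]
    intro x _
    rw [if_neg]
    rintro ⟨rfl, rfl⟩; exact h rfl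

private lemma aux_sum_stdBasis :
    ∑ i, Matrix.single i i (1:ℂ) = (1 : Matrix n n ℂ) := by
  ext k l
  simp only [Matrix.sum_apply, Matrix.single, Matrix.of_apply, Matrix.one_apply]
  by_cases h : k = l
  · subst h; simp
  · rw [if_neg h, Finset.sum_eq_zero]
    intro x _
    rw [if_neg]
    rintro ⟨rfl, rfl⟩; exact h rfl

private lemma aux_stdBasis_psd (i : n) :
    (Matrix.single i i (1:ℂ)).PosSemidef := by
  have h : Matrix.single i i (1:ℂ) = Matrix.diagonal (fun k => if k = i then 1 else 0) := by
    ext k l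
    simp only [Matrix.single, Matrix.of_apply, Matrix.diagonal_apply]
    by_cases h1 : k = l
    · subst h1; by_cases h2 : k = i <;> simp [h2]
      exact fun h3 => h2 h3.symm
    · rw [if_neg h1, if_neg]
      rintro ⟨rfl, rfl⟩; exact h1 rfl
  rw [h]
  refine Matrix.posSemidef_diagonal_iff.mpr fun k => ?_
  split <;> simp

private lemma aux_trace_re_nonneg {A : Matrix n n ℂ} (hA : A.PosSemidef) :
    0 ≤ (Matrix.trace A).re := by
  rw [Matrix.trace, Complex.re_sum]
  refine Finset.sum_nonneg fun i _ => ?_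
  have := hA.re_dotProduct_nonneg (Pi.single i 1)
  simpa [dotProduct, Matrix.mulVec, Pi.single_apply] using this

private lemma aux_trace_mul_re_nonneg {A B : Matrix n n ℂ}
    (hA : A.PosSemidef) (hB : B.PosSemidef) : 0 ≤ (Matrix.trace (A * B)).re := by
  obtain ⟨S, hS⟩ : ∃ S : Matrix n n ℂ, A = star S * S := by
    open scoped MatrixOrder in exact CStarAlgebra.nonneg_iff_eq_star_mul_self.mp hA.nonneg
  have h2 : Matrix.trace (A * B) = Matrix.trace (S * B * Sᴴ) := by
    rw [hS, mul_assoc, Matrix.trace_mul_comm, Matrix.star_eq_conjTranspose, mul_assoc]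
  rw [h2]
  exact aux_trace_re_nonneg (hB.mul_mul_conjTranspose_same S)

private lemma aux_jensen {ι : Type*} [Fintype ι] (a : ι → ℝ) (w : ι → ℝ)
    (ha : ∀ i, 0 ≤ a i) (hw : ∀ i, 0 ≤ w i) (hw1 : ∑ i, w i ≤ 1) :
    ∑ i, w i * Real.negMulLog (a i) ≤ Real.negMulLog (∑ i, w i * a i) := by
  classical
  have h := Real.concaveOn_negMulLog.le_map_sum (t := (Finset.univ : Finset (Option ι)))
    (w := fun o => Option.elim o (1 - ∑ i, w i) w)
    (p := fun o => Option.elim o 0 a)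
    (fun o _ => by cases o with
      | none => simpa using hw1
      | some i => exact hw i)
    (by rw [Fintype.sum_option]; simp)
    (fun o _ => by cases o with
      | none => exact Set.self_mem_Ici
      | some i => exact ha i)
  rw [Fintype.sum_option, Fintype.sum_option] at h
  simpa [smul_eq_mul] using h

private lemma aux_vnEntropy_eq_sum {A : Matrix n n ℂ} (hA : A.IsHermitian) :
    vnEntropy A = ∑ i, Real.negMulLog (hA.eigenvalues i) := by
  set U : Matrix n n ℂ := (hA.eigenvectorUnitary : Matrix n n ℂ) with hU
  have hUU : star U * U = 1 := hA.eigenvectorUnitary.2.1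
  have hlog : matLog A =
      U * Matrix.diagonal (fun i => (Real.log (hA.eigenvalues i) : ℂ)) * star U := by
    rw [matLog, matFun, dif_pos hA]
  have hdiag : star U * A * U = Matrix.diagonal (RCLike.ofReal ∘ hA.eigenvalues) :=
    by rw [← hA.conjStarAlgAut_star_eigenvectorUnitary, Unitary.conjStarAlgAut_star_apply]
  have htr : Matrix.trace (A * matLog A) =
      ∑ i, ((hA.eigenvalues i : ℂ) * (Real.log (hA.eigenvalues i) : ℂ)) := by
    rw [hlog, ← Matrix.mul_assoc, Matrix.trace_mul_cycle, ← Matrix.mul_assoc,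
      hdiag, Matrix.diagonal_mul_diagonal, Matrix.trace_diagonal]
    rfl
  rw [vnEntropy, htr, Complex.re_sum, ← Finset.sum_neg_distrib]
  refine Finset.sum_congr rfl fun i _ => ?_
  rw [← Complex.ofReal_mul, Complex.ofReal_re, Real.negMulLog, neg_mul]

end Aux

theorem stmt_8 {n : Type*} [Fintype n] [DecidableEq n]
    (N : Matrix n n ℂ →ₗ[ℂ] Matrix n n ℂ)
    (hpos : ∀ A : Matrix n n ℂ, A.PosSemidef → (N A).PosSemidef)
    (hTP : ∀ A : Matrix n n ℂ, Matrix.trace (N A) = Matrix.trace A)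
    (hsub : ((1 : Matrix n n ℂ) - N 1).PosSemidef)
    (ρ : Matrix n n ℂ) (hρ : ρ.PosDef) (hρ1 : Matrix.trace ρ = 1)
    (hNρ : (N ρ).PosDef) :
    vnEntropy (N ρ) ≥ vnEntropy ρ := by
  classical
  have hA : ρ.IsHermitian := hρ.1
  have hB : (N ρ).IsHermitian := hNρ.1
  set a : n → ℝ := hA.eigenvalues with hadef
  set b : n → ℝ := hB.eigenvalues with hbdef
  set U : Matrix n n ℂ := (hA.eigenvectorUnitary : Matrix n n ℂ) with hUdef
  set V : Matrix n n ℂ := (hB.eigenvectorUnitary : Matrix n n ℂ) with hVdef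
  have hUU : star U * U = 1 := hA.eigenvectorUnitary.2.1
  have hUU' : U * star U = 1 := hA.eigenvectorUnitary.2.2
  have hVV : star V * V = 1 := hB.eigenvectorUnitary.2.1
  have hVV' : V * star V = 1 := hB.eigenvectorUnitary.2.2
  set E : n → Matrix n n ℂ := fun i => Matrix.single i i 1 with hEdef
  set P : n → Matrix n n ℂ := fun i => U * E i * star U with hPdef
  set Q : n → Matrix n n ℂ := fun j => V * E j * star V with hQdef
  set M : n → n → ℝ := fun i j => (Matrix.trace (Q j * N (P i))).re with hMdef
  have hPsd : ∀ i, (P i).PosSemidef := by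
    intro i
    have h := (aux_stdBasis_psd i).mul_mul_conjTranspose_same U
    rwa [← Matrix.star_eq_conjTranspose] at h
  have hQsd : ∀ j, (Q j).PosSemidef := by
    intro j
    have h := (aux_stdBasis_psd j).mul_mul_conjTranspose_same V
    rwa [← Matrix.star_eq_conjTranspose] at h
  have htrE : ∀ i, Matrix.trace (E i) = 1 := by
    intro i
    have h := aux_trace_stdBasis_mul i (1 : Matrix n n ℂ)
    rw [Matrix.mul_one, Matrix.one_apply_eq] at h
    exact h
  have htrP : ∀ i, Matrix.trace (P i) = 1 := by
    intro i
    rw [hPdef]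
    rw [Matrix.trace_mul_cycle, hUU, Matrix.one_mul]
    exact htrE i
  have htrQ : ∀ j, Matrix.trace (Q j) = 1 := by
    intro j
    rw [hQdef]
    rw [Matrix.trace_mul_cycle, hVV, Matrix.one_mul]
    exact htrE j
  have hsumP : ∑ i, P i = 1 := by
    have h : ∑ i, P i = U * (∑ i, E i) * star U := by
      rw [Finset.mul_sum, Finset.sum_mul]
    rw [h, hEdef, aux_sum_stdBasis, Matrix.mul_one, hUU']
  have hsumQ : ∑ j, Q j = 1 := by
    have h : ∑ j, Q j = V * (∑ j, E j) * star V := by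
      rw [Finset.mul_sum, Finset.sum_mul]
    rw [h, hEdef, aux_sum_stdBasis, Matrix.mul_one, hVV']
  have hM0 : ∀ i j, 0 ≤ M i j := fun i j =>
    aux_trace_mul_re_nonneg (hQsd j) (hpos _ (hPsd i))
  have hrow : ∀ i, ∑ j, M i j = 1 := by
    intro i
    have h1 : ∑ j, Matrix.trace (Q j * N (P i)) = Matrix.trace (N (P i)) := by
      rw [← Matrix.trace_sum, ← Finset.sum_mul, hsumQ, Matrix.one_mul]
    calc ∑ j, M i j = (∑ j, Matrix.trace (Q j * N (P i))).re := by
          rw [Complex.re_sum]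
      _ = (Matrix.trace (N (P i))).re := by rw [h1]
      _ = 1 := by rw [hTP, htrP i, Complex.one_re]
  have hcol : ∀ j, ∑ i, M i j ≤ 1 := by
    intro j
    have h1 : ∑ i, Matrix.trace (Q j * N (P i)) = Matrix.trace (Q j * N 1) := by
      rw [← hsumP, map_sum, Finset.mul_sum, Matrix.trace_sum]
    have h2 : Matrix.trace (Q j * N 1) =
        Matrix.trace (Q j) - Matrix.trace (Q j * (1 - N 1)) := by
      rw [Matrix.mul_sub, Matrix.trace_sub, Matrix.mul_one]
      ring
    have h3 : 0 ≤ (Matrix.trace (Q j * (1 - N 1))).re :=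
      aux_trace_mul_re_nonneg (hQsd j) hsub
    calc ∑ i, M i j = (∑ i, Matrix.trace (Q j * N (P i))).re := by
          rw [Complex.re_sum]
      _ = (Matrix.trace (Q j)).re - (Matrix.trace (Q j * (1 - N 1))).re := by
          rw [h1, h2, Complex.sub_re]
      _ ≤ (Matrix.trace (Q j)).re := by linarith
      _ = 1 := by rw [htrQ j, Complex.one_re]
  -- decomposition of ρ
  have hρsum : ρ = ∑ i, (a i : ℂ) • P i := by
    have hspec : ρ = U * Matrix.diagonal (RCLike.ofReal ∘ a) * star U := hA.spectral_theorem
    have hd : Matrix.diagonal (RCLike.ofReal ∘ a) = ∑ i, (a i : ℂ) • E i :=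
      aux_diagonal_eq_sum _
    calc ρ = U * (∑ i, (a i : ℂ) • E i) * star U := by rw [← hd, ← hspec]
      _ = ∑ i, (a i : ℂ) • P i := by
          rw [Finset.mul_sum, Finset.sum_mul]
          refine Finset.sum_congr rfl fun i _ => ?_
          rw [Matrix.mul_smul, Matrix.smul_mul]
  -- eigenvalues of N ρ
  have hbval : ∀ j, b j = ∑ i, M i j * a i := by
    intro j
    have hdiagB : star V * (N ρ) * V = Matrix.diagonal (RCLike.ofReal ∘ b) :=
      by rw [← hB.conjStarAlgAut_star_eigenvectorUnitary, Unitary.conjStarAlgAut_star_apply]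
    have hQB : Matrix.trace (Q j * N ρ) = (b j : ℂ) := by
      have hdiagB' : star V * (N ρ * V) = Matrix.diagonal (RCLike.ofReal ∘ b) := by
        rw [← Matrix.mul_assoc]; exact hdiagB
      rw [hQdef]
      simp only [Matrix.mul_assoc]
      rw [Matrix.trace_mul_comm]
      simp only [Matrix.mul_assoc]
      rw [hdiagB']
      simp only [hEdef]
      rw [aux_trace_stdBasis_mul]
      simp [Matrix.diagonal_apply_eq]
    have hNρsum : N ρ = ∑ i, (a i : ℂ) • N (P i) := by
      conv_lhs => rw [hρsum]
      rw [map_sum]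
      exact Finset.sum_congr rfl fun i _ => by rw [map_smul]
    have h2 : Matrix.trace (Q j * N ρ) = ∑ i, (a i : ℂ) * Matrix.trace (Q j * N (P i)) := by
      rw [hNρsum, Finset.mul_sum, Matrix.trace_sum]
      refine Finset.sum_congr rfl fun i _ => ?_
      rw [Matrix.mul_smul, Matrix.trace_smul, smul_eq_mul]
    have h3 : (b j : ℂ).re = (∑ i, (a i : ℂ) * Matrix.trace (Q j * N (P i))).re := by
      rw [← h2, hQB]
    rw [Complex.ofReal_re, Complex.re_sum] at h3
    rw [h3]
    refine Finset.sum_congr rfl fun i _ => ?_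
    rw [Complex.re_ofReal_mul, mul_comm]
  have hapos : ∀ i, 0 ≤ a i := fun i => (hρ.eigenvalues_pos i).le
  -- final Jensen argument
  rw [ge_iff_le, aux_vnEntropy_eq_sum hA, aux_vnEntropy_eq_sum hB]
  have key : ∀ j, ∑ i, M i j * Real.negMulLog (a i) ≤ Real.negMulLog (b j) := by
    intro j
    have h := aux_jensen a (fun i => M i j) hapos (fun i => hM0 i j) (hcol j)
    rwa [← hbval j] at h
  calc ∑ i, Real.negMulLog (a i)
      = ∑ i, (∑ j, M i j) * Real.negMulLog (a i) := by
        refine Finset.sum_congr rfl fun i _ => ?_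
        rw [hrow i, one_mul]
    _ = ∑ j, ∑ i, M i j * Real.negMulLog (a i) := by
        rw [Finset.sum_comm]
        refine Finset.sum_congr rfl fun i _ => ?_
        rw [Finset.sum_mul]
    _ ≤ ∑ j, Real.negMulLog (b j) := Finset.sum_le_sum fun j _ => key j
end

section
/- Let {M_t}_{t≥0} be a semigroup of unital, self-adjoint (M_t† = M_t), positive, trace-preserving linear maps on matrices, with M_s ∘ M_t = M_{s+t}. For ρ_0 > 0 a density matrix with ρ_t := M_t(ρ_0) > 0 for all t, the entropy at time t satisfies −Tr(ρ_0 log ρ_{2t}) ≤ S(ρ_t) ≤ −Tr(ρ_{2t} log ρ_0). -/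
open scoped Matrix Kronecker ComplexOrder

set_option linter.unusedSectionVars false

namespace StmtAux
open Matrix Filter

variable {n : Type*} [Fintype n] [DecidableEq n]

/-- spectral projection onto i-th eigenvector -/
noncomputable def sproj {A : Matrix n n ℂ} (hA : A.IsHermitian) (i : n) : Matrix n n ℂ :=
  (hA.eigenvectorUnitary : Matrix n n ℂ) *
    Matrix.diagonal (fun j => if j = i then (1:ℂ) else 0) *
    star (hA.eigenvectorUnitary : Matrix n n ℂ)

lemma matFun_eq (f : ℝ → ℝ) {A : Matrix n n ℂ} (hA : A.IsHermitian) :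
    matFun f A = (hA.eigenvectorUnitary : Matrix n n ℂ) *
      Matrix.diagonal (fun i => (f (hA.eigenvalues i) : ℂ)) *
      star (hA.eigenvectorUnitary : Matrix n n ℂ) := by
  rw [matFun, dif_pos hA]

lemma diagonal_eq_sum (c : n → ℂ) :
    Matrix.diagonal c = ∑ i, c i • Matrix.diagonal (fun j => if j = i then (1:ℂ) else 0) := by
  ext a b
  by_cases hab : a = b
  · subst hab
    simp [Matrix.diagonal_apply, Finset.sum_ite_eq, Matrix.sum_apply]
  · simp [Matrix.diagonal_apply, hab, Matrix.sum_apply]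

lemma matFun_eq_sum (f : ℝ → ℝ) {A : Matrix n n ℂ} (hA : A.IsHermitian) :
    matFun f A = ∑ i, (f (hA.eigenvalues i) : ℂ) • sproj hA i := by
  rw [matFun_eq f hA, diagonal_eq_sum fun i => (f (hA.eigenvalues i) : ℂ)]
  rw [Finset.mul_sum, Finset.sum_mul]
  refine Finset.sum_congr rfl fun i _ => ?_
  rw [mul_smul_comm, smul_mul_assoc]
  rfl

lemma sproj_posSemidef {A : Matrix n n ℂ} (hA : A.IsHermitian) (i : n) :
    (sproj hA i).PosSemidef := by
  have h := posSemidef_self_mul_conjTranspose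
    ((hA.eigenvectorUnitary : Matrix n n ℂ) * Matrix.diagonal (fun j => if j = i then (1:ℂ) else 0))
  have heq : ((hA.eigenvectorUnitary : Matrix n n ℂ) *
        Matrix.diagonal (fun j => if j = i then (1:ℂ) else 0)) *
      ((hA.eigenvectorUnitary : Matrix n n ℂ) *
        Matrix.diagonal (fun j => if j = i then (1:ℂ) else 0))ᴴ = sproj hA i := by
    rw [conjTranspose_mul, diagonal_conjTranspose]
    have : (star fun j => if j = i then (1:ℂ) else 0) = fun j => if j = i then (1:ℂ) else 0 := by
      funext j; by_cases h : j = i <;> simp [h]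
    rw [this, sproj]
    rw [Matrix.mul_assoc, Matrix.mul_assoc, ← Matrix.mul_assoc (Matrix.diagonal _),
      diagonal_mul_diagonal]
    have h2 : (fun j => (if j = i then (1:ℂ) else 0) * (if j = i then (1:ℂ) else 0))
        = fun j => if j = i then (1:ℂ) else 0 := by
      funext j; by_cases h : j = i <;> simp [h]
    rw [h2]
    rfl
  rwa [heq] at h

lemma sum_sproj {A : Matrix n n ℂ} (hA : A.IsHermitian) :
    ∑ i, sproj hA i = 1 := by
  have : ∑ i, sproj hA i = (hA.eigenvectorUnitary : Matrix n n ℂ) *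
      (∑ i, Matrix.diagonal (fun j => if j = i then (1:ℂ) else 0)) *
      star (hA.eigenvectorUnitary : Matrix n n ℂ) := by
    rw [Finset.mul_sum, Finset.sum_mul]; rfl
  rw [this]
  have h1 : (∑ i, Matrix.diagonal (fun j => if j = i then (1:ℂ) else 0)) = (1 : Matrix n n ℂ) := by
    ext a b
    by_cases hab : a = b
    · subst hab; simp [Matrix.sum_apply, Matrix.diagonal_apply, Finset.sum_ite_eq,
        Matrix.one_apply]
    · simp [Matrix.sum_apply, Matrix.diagonal_apply, hab, Matrix.one_apply]
  rw [h1, Matrix.mul_one]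
  exact (Matrix.mem_unitaryGroup_iff).mp hA.eigenvectorUnitary.2

lemma matFun_id {A : Matrix n n ℂ} (hA : A.IsHermitian) : matFun (fun x => x) A = A := by
  rw [matFun_eq _ hA]
  exact (hA.spectral_theorem).symm

lemma matFun_mul_matFun (f g : ℝ → ℝ) {A : Matrix n n ℂ} (hA : A.IsHermitian) :
    matFun f A * matFun g A = matFun (fun x => f x * g x) A := by
  rw [matFun_eq f hA, matFun_eq g hA, matFun_eq _ hA]
  have hU : star (hA.eigenvectorUnitary : Matrix n n ℂ) * (hA.eigenvectorUnitary : Matrix n n ℂ)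
      = 1 := (Matrix.mem_unitaryGroup_iff').mp hA.eigenvectorUnitary.2
  simp only [Matrix.mul_assoc]
  rw [← Matrix.mul_assoc (star (hA.eigenvectorUnitary : Matrix n n ℂ))
    ((hA.eigenvectorUnitary : Matrix n n ℂ)), hU, Matrix.one_mul,
    ← Matrix.mul_assoc (Matrix.diagonal _), diagonal_mul_diagonal]
  norm_num

lemma matFun_congr {A : Matrix n n ℂ} (hA : A.IsHermitian) {f g : ℝ → ℝ}
    (h : ∀ i, f (hA.eigenvalues i) = g (hA.eigenvalues i)) : matFun f A = matFun g A := by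
  rw [matFun_eq f hA, matFun_eq g hA]
  have : (fun i => (f (hA.eigenvalues i) : ℂ)) = fun i => (g (hA.eigenvalues i) : ℂ) :=
    funext fun i => by rw [h i]
  rw [this]

lemma matFun_herm (f : ℝ → ℝ) {A : Matrix n n ℂ} (hA : A.IsHermitian) :
    (matFun f A).IsHermitian := by
  rw [matFun_eq f hA]
  unfold Matrix.IsHermitian
  rw [conjTranspose_mul, conjTranspose_mul, diagonal_conjTranspose, star_eq_conjTranspose,
    conjTranspose_conjTranspose]
  have : (star fun i => (f (hA.eigenvalues i) : ℂ)) = fun i => (f (hA.eigenvalues i) : ℂ) := by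
    funext i; simp
  rw [this, Matrix.mul_assoc]

lemma matFun_smul_const (c : ℝ) {A : Matrix n n ℂ} (hA : A.IsHermitian) :
    matFun (fun _ => c) A = (c : ℂ) • 1 := by
  rw [matFun_eq _ hA]
  have h1 : Matrix.diagonal (fun _ : n => (c:ℂ)) = (c:ℂ) • 1 := by
    ext a b
    by_cases hab : a = b
    · subst hab; simp [Matrix.diagonal_apply, Matrix.one_apply]
    · simp [Matrix.diagonal_apply, hab, Matrix.one_apply]
  rw [h1, mul_smul_comm, smul_mul_assoc, Matrix.mul_one,
    (Matrix.mem_unitaryGroup_iff).mp hA.eigenvectorUnitary.2]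

lemma matFun_add (f g : ℝ → ℝ) {A : Matrix n n ℂ} (hA : A.IsHermitian) :
    matFun f A + matFun g A = matFun (fun x => f x + g x) A := by
  rw [matFun_eq f hA, matFun_eq g hA, matFun_eq _ hA, ← Matrix.add_mul, ← Matrix.mul_add,
    diagonal_add]
  norm_num

lemma posSemidef_real_smul {P : Matrix n n ℂ} (hP : P.PosSemidef) {r : ℝ} (hr : 0 ≤ r) :
    ((r : ℂ) • P).PosSemidef := by
  refine PosSemidef.of_dotProduct_mulVec_nonneg ?_ ?_
  · unfold Matrix.IsHermitian
    rw [conjTranspose_smul, hP.1]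
    norm_num
  · intro x
    rw [Matrix.smul_mulVec, dotProduct_smul]
    exact mul_nonneg (by exact_mod_cast hr) (hP.dotProduct_mulVec_nonneg x)

lemma matFun_posSemidef {f : ℝ → ℝ} {A : Matrix n n ℂ} (hA : A.IsHermitian)
    (hf : ∀ i, 0 ≤ f (hA.eigenvalues i)) : (matFun f A).PosSemidef := by
  rw [matFun_eq_sum f hA]
  refine Finset.sum_induction _ _ (fun a b ha hb => ha.add hb) Matrix.PosSemidef.zero ?_
  intro i _
  exact posSemidef_real_smul (sproj_posSemidef hA i) (hf i)

/-! ### quadratic forms -/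

noncomputable def qf (C : Matrix n n ℂ) (x : n → ℂ) : ℝ := (star x ⬝ᵥ C *ᵥ x).re

lemma qf_nonneg {C : Matrix n n ℂ} (hC : C.PosSemidef) (x : n → ℂ) : 0 ≤ qf C x := by
  have := hC.dotProduct_mulVec_nonneg x
  rw [Complex.nonneg_iff] at this
  exact this.1

lemma dot_eq_qf {C : Matrix n n ℂ} (hC : C.PosSemidef) (x : n → ℂ) :
    star x ⬝ᵥ C *ᵥ x = (qf C x : ℂ) := by
  have := hC.dotProduct_mulVec_nonneg x
  rw [Complex.nonneg_iff] at this
  exact Complex.ext rfl this.2.symm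

lemma dot_cs (u w : n → ℂ) :
    ‖star u ⬝ᵥ w‖ ^ 2 ≤ (star u ⬝ᵥ u).re * (star w ⬝ᵥ w).re := by
  let u' : EuclideanSpace ℂ n := (WithLp.equiv 2 (n → ℂ)).symm u
  let w' : EuclideanSpace ℂ n := (WithLp.equiv 2 (n → ℂ)).symm w
  have hinner : inner ℂ u' w' = star u ⬝ᵥ w := by
    rw [PiLp.inner_apply]
    simp [RCLike.inner_apply, dotProduct, u', w', mul_comm]
  have huu : (star u ⬝ᵥ u).re = ‖u'‖ ^ 2 := by
    have h2 : inner ℂ u' u' = star u ⬝ᵥ u := by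
      rw [PiLp.inner_apply]
      simp [RCLike.inner_apply, dotProduct, u', mul_comm]
      exact Finset.sum_congr rfl fun i _ => by
        rw [Complex.mul_conj, Complex.normSq_eq_norm_sq, Complex.ofReal_pow]
    rw [← inner_self_eq_norm_sq (𝕜 := ℂ) u', h2, RCLike.re_to_complex]
  have hww : (star w ⬝ᵥ w).re = ‖w'‖ ^ 2 := by
    have h2 : inner ℂ w' w' = star w ⬝ᵥ w := by
      rw [PiLp.inner_apply]
      simp [RCLike.inner_apply, dotProduct, w', mul_comm]
      exact Finset.sum_congr rfl fun i _ => by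
        rw [Complex.mul_conj, Complex.normSq_eq_norm_sq, Complex.ofReal_pow]
    rw [← inner_self_eq_norm_sq (𝕜 := ℂ) w', h2, RCLike.re_to_complex]
  have := norm_inner_le_norm (𝕜 := ℂ) u' w'
  rw [hinner] at this
  have h3 : ‖star u ⬝ᵥ w‖ ^ 2 ≤ (‖u'‖ * ‖w'‖) ^ 2 := by
    exact pow_le_pow_left₀ (norm_nonneg _) this 2
  rw [huu, hww]
  calc ‖star u ⬝ᵥ w‖ ^ 2 ≤ (‖u'‖ * ‖w'‖) ^ 2 := h3
    _ = ‖u'‖ ^ 2 * ‖w'‖ ^ 2 := by ring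

lemma cs_psd {T : Matrix n n ℂ} (hT : T.PosSemidef) (y x : n → ℂ) :
    ‖star y ⬝ᵥ T *ᵥ x‖ ^ 2 ≤ qf T y * qf T x := by
  obtain ⟨B, hB⟩ : ∃ B : Matrix n n ℂ, T = Bᴴ * B := by
    open scoped MatrixOrder in
    refine ⟨CFC.sqrt T, ?_⟩
    rw [← star_eq_conjTranspose, (CFC.sqrt_nonneg T).isSelfAdjoint.star_eq,
      CFC.sqrt_mul_sqrt_self T hT.nonneg]
  have key : ∀ v w : n → ℂ, star v ⬝ᵥ T *ᵥ w = star (B *ᵥ v) ⬝ᵥ (B *ᵥ w) := by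
    intro v w
    rw [hB, ← Matrix.mulVec_mulVec, Matrix.dotProduct_mulVec, ← Matrix.star_mulVec]
  rw [qf, qf, key, key, key]
  exact dot_cs (B *ᵥ y) (B *ᵥ x)

/-- the linear map C ↦ star y ⬝ᵥ C *ᵥ x -/
noncomputable def dotMap (y x : n → ℂ) : Matrix n n ℂ →ₗ[ℂ] ℂ where
  toFun C := star y ⬝ᵥ C *ᵥ x
  map_add' C D := by rw [Matrix.add_mulVec, dotProduct_add]
  map_smul' c C := by rw [Matrix.smul_mulVec, dotProduct_smul]; rfl

lemma dotMap_apply (y x : n → ℂ) (C : Matrix n n ℂ) : dotMap y x C = star y ⬝ᵥ C *ᵥ x := rfl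

lemma dot_sum_smul (y x : n → ℂ) {ι : Type*} [Fintype ι] (c : ι → ℝ) (C : ι → Matrix n n ℂ) :
    star y ⬝ᵥ (∑ i, (c i : ℂ) • C i) *ᵥ x = ∑ i, (c i : ℂ) * (star y ⬝ᵥ C i *ᵥ x) := by
  rw [← dotMap_apply, map_sum]
  simp [dotMap_apply, _root_.map_smul, smul_eq_mul]

lemma dot_sum (y x : n → ℂ) {ι : Type*} [Fintype ι] (C : ι → Matrix n n ℂ) :
    star y ⬝ᵥ (∑ i, C i) *ᵥ x = ∑ i, (star y ⬝ᵥ C i *ᵥ x) := by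
  rw [← dotMap_apply, map_sum]
  simp [dotMap_apply]

/-! ### scalar lemma -/

lemma scalar_key {ι κ : Type*} [Fintype ι] [Fintype κ]
    (s : ι → ℝ) (ν : κ → ℝ) (q : ι → ℝ) (p : κ → ℝ)
    (hs : ∀ i, 0 < s i) (hν : ∀ k, 0 < ν k)
    (hsum : ∑ i, q i = ∑ k, p k)
    (hineq : ∀ l : ℝ, 0 ≤ l → ∑ k, p k * (ν k + l)⁻¹ ≤ ∑ i, q i * (s i + l)⁻¹) :
    ∑ i, q i * Real.log (s i) ≤ ∑ k, p k * Real.log (ν k) := by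
  set G : ℝ → ℝ := fun l => (∑ i, q i * Real.log (s i + l)) - ∑ k, p k * Real.log (ν k + l)
    with hG
  have hderiv : ∀ l : ℝ, 0 ≤ l → HasDerivAt G
      ((∑ i, q i * (s i + l)⁻¹) - ∑ k, p k * (ν k + l)⁻¹) l := by
    intro l hl
    have h1 : HasDerivAt (fun l => ∑ i, q i * Real.log (s i + l))
        (∑ i, q i * (s i + l)⁻¹) l := by
      refine HasDerivAt.fun_sum fun i _ => ?_
      have hpos : 0 < s i + l := by linarith [hs i]
      have h := ((hasDerivAt_id l).const_add (s i)).log (ne_of_gt hpos)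
      simpa [one_div] using h.const_mul (q i)
    have h2 : HasDerivAt (fun l => ∑ k, p k * Real.log (ν k + l))
        (∑ k, p k * (ν k + l)⁻¹) l := by
      refine HasDerivAt.fun_sum fun k _ => ?_
      have hpos : 0 < ν k + l := by linarith [hν k]
      have h := ((hasDerivAt_id l).const_add (ν k)).log (ne_of_gt hpos)
      simpa [one_div] using h.const_mul (p k)
    exact h1.sub h2
  have hmono : MonotoneOn G (Set.Ici (0:ℝ)) := by
    refine monotoneOn_of_hasDerivWithinAt_nonneg (convex_Ici 0)
      (f' := fun l => (∑ i, q i * (s i + l)⁻¹) - ∑ k, p k * (ν k + l)⁻¹) ?_ ?_ ?_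
    · intro l hl
      exact (hderiv l hl).continuousAt.continuousWithinAt
    · intro l hl
      rw [interior_Ici] at hl
      exact (hderiv l (le_of_lt hl)).hasDerivWithinAt
    · intro l hl
      rw [interior_Ici] at hl
      have := hineq l (le_of_lt hl)
      linarith
  have htend : Filter.Tendsto G Filter.atTop (nhds 0) := by
    have hterm : ∀ c : ℝ, 0 < c →
        Filter.Tendsto (fun l : ℝ => Real.log (c + l) - Real.log (1 + l))
          Filter.atTop (nhds 0) := by
      intro c hc
      have h1 : Filter.Tendsto (fun l : ℝ => 1 + (c - 1) / (1 + l)) Filter.atTop (nhds 1) := by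
        have := (tendsto_const_nhds (x := c - 1) (f := Filter.atTop (α := ℝ))).div_atTop
          (tendsto_atTop_add_const_left _ 1 tendsto_id)
        simpa using tendsto_const_nhds.add this
      have h2 : Filter.Tendsto (fun l : ℝ => Real.log (1 + (c - 1) / (1 + l)))
          Filter.atTop (nhds 0) := by
        have := (Real.continuousAt_log (one_ne_zero)).tendsto.comp h1
        simpa [Function.comp_def] using this
      refine h2.congr' ?_
      filter_upwards [Filter.eventually_ge_atTop (0:ℝ)] with l hl
      have hc1 : 0 < c + l := by linarith
      have h11 : 0 < 1 + l := by linarith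
      rw [show 1 + (c - 1) / (1 + l) = (c + l) / (1 + l) by field_simp; ring]
      rw [Real.log_div (ne_of_gt hc1) (ne_of_gt h11)]
    have hH : Filter.Tendsto (fun l => (∑ i, q i * (Real.log (s i + l) - Real.log (1 + l)))
        - ∑ k, p k * (Real.log (ν k + l) - Real.log (1 + l))) Filter.atTop (nhds 0) := by
      have hA : Filter.Tendsto (fun l => ∑ i, q i * (Real.log (s i + l) - Real.log (1 + l)))
          Filter.atTop (nhds 0) := by
        have := tendsto_finset_sum (Finset.univ : Finset ι)
          (fun i _ => (hterm (s i) (hs i)).const_mul (q i))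
        simpa using this
      have hB : Filter.Tendsto (fun l => ∑ k, p k * (Real.log (ν k + l) - Real.log (1 + l)))
          Filter.atTop (nhds 0) := by
        have := tendsto_finset_sum (Finset.univ : Finset κ)
          (fun k _ => (hterm (ν k) (hν k)).const_mul (p k))
        simpa using this
      simpa using hA.sub hB
    refine hH.congr' ?_
    filter_upwards [Filter.eventually_ge_atTop (0:ℝ)] with l hl
    simp only [mul_sub, Finset.sum_sub_distrib, ← Finset.sum_mul, hG]
    rw [hsum]
    exact sub_sub_sub_cancel_right _ _ _
  have h0 : G 0 ≤ 0 := by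
    refine ge_of_tendsto htend ?_
    filter_upwards [Filter.eventually_ge_atTop (0:ℝ)] with l hl
    exact hmono (Set.mem_Ici.mpr le_rfl) (Set.mem_Ici.mpr hl) hl
  simp only [hG, add_zero] at h0
  linarith

/-! ### the key lambda-inequality (pointwise Choi inequality for the resolvent) -/

lemma lam_ineq (Φ : Matrix n n ℂ →ₗ[ℂ] Matrix n n ℂ)
    (hΦpos : ∀ A : Matrix n n ℂ, A.PosSemidef → (Φ A).PosSemidef) (hΦ1 : Φ 1 = 1)
    {σ : Matrix n n ℂ} (hσ : σ.PosDef) (hB : (Φ σ).PosDef) (x : n → ℂ)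
    (l : ℝ) (hl : 0 ≤ l) :
    ∑ k, qf (sproj hB.1 k) x * (hB.1.eigenvalues k + l)⁻¹
      ≤ ∑ i, qf (Φ (sproj hσ.1 i)) x * (hσ.1.eigenvalues i + l)⁻¹ := by
  have hσH : σ.IsHermitian := hσ.1
  have hBH : (Φ σ).IsHermitian := hB.1
  have hspos : ∀ i, 0 < hσH.eigenvalues i := fun i => hσ.eigenvalues_pos i
  have hνpos : ∀ k, 0 < hBH.eigenvalues k := fun k => hB.eigenvalues_pos k
  have hsl : ∀ i, 0 < hσH.eigenvalues i + l := fun i => by linarith [hspos i]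
  have hνl : ∀ k, 0 < hBH.eigenvalues k + l := fun k => by linarith [hνpos k]
  have hTpsd : ∀ i, (Φ (sproj hσH i)).PosSemidef := fun i => hΦpos _ (sproj_posSemidef hσH i)
  have hRpsd : ∀ k, (sproj hBH k).PosSemidef := fun k => sproj_posSemidef hBH k
  have hq : ∀ i, 0 ≤ qf (Φ (sproj hσH i)) x := fun i => qf_nonneg (hTpsd i) x
  set D : Matrix n n ℂ := matFun (fun v => (v + l)⁻¹) (Φ σ) with hD_def
  have hDpsd : D.PosSemidef :=
    matFun_posSemidef hBH fun k => le_of_lt (inv_pos.mpr (hνl k))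
  have hDH : D.IsHermitian := hDpsd.1
  set y : n → ℂ := D *ᵥ x with hy_def
  set c : ℝ := qf D x with hc_def
  have hc_nonneg : 0 ≤ c := qf_nonneg hDpsd x
  -- c equals the left sum
  have hc_eq : c = ∑ k, qf (sproj hBH k) x * (hBH.eigenvalues k + l)⁻¹ := by
    have h1 : star x ⬝ᵥ D *ᵥ x
        = ∑ k, (((hBH.eigenvalues k + l)⁻¹ : ℝ) : ℂ) * (star x ⬝ᵥ (sproj hBH k) *ᵥ x) := by
      rw [hD_def, matFun_eq_sum _ hBH]
      exact dot_sum_smul x x _ _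
    have h2 : star x ⬝ᵥ D *ᵥ x
        = ((∑ k, qf (sproj hBH k) x * (hBH.eigenvalues k + l)⁻¹ : ℝ) : ℂ) := by
      rw [h1, Complex.ofReal_sum]
      refine Finset.sum_congr rfl fun k _ => ?_
      rw [dot_eq_qf (hRpsd k) x]
      push_cast
      ring
    have h3 := dot_eq_qf hDpsd x
    rw [h2] at h3
    exact_mod_cast congrArg Complex.re h3.symm
  -- star y
  have hystar : star y = star x ᵥ* D := by
    rw [hy_def, star_mulVec, hDH.eq]
  have hyx : star y ⬝ᵥ x = (c : ℂ) := by
    rw [hystar, ← Matrix.dotProduct_mulVec, dot_eq_qf hDpsd]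
  -- the matrix W = Φ σ + l • 1
  set W : Matrix n n ℂ := Φ σ + (l : ℂ) • 1 with hW_def
  have hWB : W = matFun (fun v => v + l) (Φ σ) := by
    rw [hW_def, ← matFun_add (fun v => v) (fun _ => l) hBH, matFun_id hBH,
      matFun_smul_const l hBH]
  have hDWD : D * W * D = D := by
    rw [hWB, hD_def, matFun_mul_matFun _ _ hBH, matFun_mul_matFun _ _ hBH]
    refine matFun_congr hBH fun k => ?_
    have := hνl k
    field_simp
  have hyy : star y ⬝ᵥ W *ᵥ y = (c : ℂ) := by
    rw [hy_def, hystar, Matrix.mulVec_mulVec, ← Matrix.dotProduct_mulVec,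
      Matrix.mulVec_mulVec, ← Matrix.mul_assoc, hDWD, dot_eq_qf hDpsd]
  -- expansion of W over the σ-spectral projections
  have hWsum : W = ∑ i, ((hσH.eigenvalues i + l : ℝ) : ℂ) • Φ (sproj hσH i) := by
    have h1 : matFun (fun v => v + l) σ = σ + (l : ℂ) • 1 := by
      rw [← matFun_add (fun v => v) (fun _ => l) hσH, matFun_id hσH, matFun_smul_const l hσH]
    have h2 : W = Φ (matFun (fun v => v + l) σ) := by
      rw [h1, map_add, LinearMap.map_smul, hΦ1, hW_def]
    rw [h2, matFun_eq_sum _ hσH, map_sum]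
    refine Finset.sum_congr rfl fun i _ => ?_
    rw [LinearMap.map_smul]
  -- sum of (s i + l) * t i = c
  have htsum : ∑ i, (hσH.eigenvalues i + l) * qf (Φ (sproj hσH i)) y = c := by
    have h1 : star y ⬝ᵥ W *ᵥ y
        = ∑ i, ((hσH.eigenvalues i + l : ℝ) : ℂ) * (star y ⬝ᵥ (Φ (sproj hσH i)) *ᵥ y) := by
      rw [hWsum]
      exact dot_sum_smul y y _ _
    have h2 : star y ⬝ᵥ W *ᵥ y
        = ((∑ i, (hσH.eigenvalues i + l) * qf (Φ (sproj hσH i)) y : ℝ) : ℂ) := by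
      rw [h1, Complex.ofReal_sum]
      refine Finset.sum_congr rfl fun i _ => ?_
      rw [dot_eq_qf (hTpsd i) y]
      push_cast
      ring
    rw [hyy] at h2
    have h3 := h2.symm
    exact_mod_cast h3
  -- sum of z i = c
  have hzsum : ∑ i, star y ⬝ᵥ (Φ (sproj hσH i)) *ᵥ x = (c : ℂ) := by
    rw [← dot_sum y x, ← map_sum, sum_sproj, hΦ1, Matrix.one_mulVec, hyx]
  -- per-term bound
  have hz_bound : ∀ i, ‖star y ⬝ᵥ (Φ (sproj hσH i)) *ᵥ x‖
      ≤ Real.sqrt ((hσH.eigenvalues i + l) * qf (Φ (sproj hσH i)) y)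
        * Real.sqrt (qf (Φ (sproj hσH i)) x * (hσH.eigenvalues i + l)⁻¹) := by
    intro i
    have h1 := cs_psd (hTpsd i) y x
    have h2 : qf (Φ (sproj hσH i)) y * qf (Φ (sproj hσH i)) x
        = ((hσH.eigenvalues i + l) * qf (Φ (sproj hσH i)) y)
          * (qf (Φ (sproj hσH i)) x * (hσH.eigenvalues i + l)⁻¹) := by
      field_simp [ne_of_gt (hsl i)]
    have h3 : ‖star y ⬝ᵥ (Φ (sproj hσH i)) *ᵥ x‖
        = Real.sqrt (‖star y ⬝ᵥ (Φ (sproj hσH i)) *ᵥ x‖ ^ 2) :=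
      (Real.sqrt_sq (norm_nonneg _)).symm
    rw [h3, ← Real.sqrt_mul (mul_nonneg (le_of_lt (hsl i)) (qf_nonneg (hTpsd i) y))]
    apply Real.sqrt_le_sqrt
    rw [← h2]
    exact h1
  -- assemble Cauchy-Schwarz
  set Q : ℝ := ∑ i, qf (Φ (sproj hσH i)) x * (hσH.eigenvalues i + l)⁻¹ with hQ_def
  have hQ_nonneg : 0 ≤ Q :=
    Finset.sum_nonneg fun i _ => mul_nonneg (hq i) (le_of_lt (inv_pos.mpr (hsl i)))
  have hcQ : c ≤ Real.sqrt c * Real.sqrt Q := by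
    have h0 : c = ‖(c : ℂ)‖ := by
      rw [Complex.norm_real, Real.norm_eq_abs, abs_of_nonneg hc_nonneg]
    calc c = ‖∑ i, star y ⬝ᵥ (Φ (sproj hσH i)) *ᵥ x‖ := by rw [hzsum, ← h0]
      _ ≤ ∑ i, ‖star y ⬝ᵥ (Φ (sproj hσH i)) *ᵥ x‖ :=
          norm_sum_le _ _
      _ ≤ ∑ i, Real.sqrt ((hσH.eigenvalues i + l) * qf (Φ (sproj hσH i)) y)
            * Real.sqrt (qf (Φ (sproj hσH i)) x * (hσH.eigenvalues i + l)⁻¹) :=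
          Finset.sum_le_sum fun i _ => hz_bound i
      _ ≤ Real.sqrt (∑ i, (hσH.eigenvalues i + l) * qf (Φ (sproj hσH i)) y)
            * Real.sqrt (∑ i, qf (Φ (sproj hσH i)) x * (hσH.eigenvalues i + l)⁻¹) :=
          Real.sum_sqrt_mul_sqrt_le _
            (fun i => mul_nonneg (le_of_lt (hsl i)) (qf_nonneg (hTpsd i) y))
            (fun i => mul_nonneg (hq i) (le_of_lt (inv_pos.mpr (hsl i))))
      _ = Real.sqrt c * Real.sqrt Q := by rw [htsum]
  have hfinal : c ≤ Q := by
    rcases eq_or_lt_of_le hc_nonneg with h0 | h0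
    · rw [← h0]; exact hQ_nonneg
    · nlinarith [hcQ, Real.sq_sqrt hc_nonneg, Real.sq_sqrt hQ_nonneg, Real.sqrt_nonneg c,
        Real.sqrt_nonneg Q, sq_nonneg (Real.sqrt c - Real.sqrt Q), Real.sqrt_pos.mpr h0]
  exact le_of_eq_of_le hc_eq.symm hfinal

/-! ### per-vector log inequality -/

lemma herm_dot_real {C : Matrix n n ℂ} (hC : C.IsHermitian) (x : n → ℂ) :
    star x ⬝ᵥ C *ᵥ x = (((star x ⬝ᵥ C *ᵥ x).re : ℝ) : ℂ) := by
  have h1 : (starRingEnd ℂ) (star x ⬝ᵥ C *ᵥ x) = star x ⬝ᵥ C *ᵥ x := by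
    have h2 : star x ⬝ᵥ C *ᵥ x = star (star (C *ᵥ x) ⬝ᵥ x) := Matrix.star_dotProduct _ _
    calc (starRingEnd ℂ) (star x ⬝ᵥ C *ᵥ x) = star (star x ⬝ᵥ C *ᵥ x) := rfl
      _ = star (C *ᵥ x) ⬝ᵥ x := by rw [h2, star_star]
      _ = (star x ᵥ* Cᴴ) ⬝ᵥ x := by rw [Matrix.star_mulVec]
      _ = star x ⬝ᵥ Cᴴ *ᵥ x := by rw [← Matrix.dotProduct_mulVec]
      _ = star x ⬝ᵥ C *ᵥ x := by rw [hC.eq]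
  exact (Complex.conj_eq_iff_re.mp h1).symm

lemma isHermitian_real_smul {H : Matrix n n ℂ} (hH : H.IsHermitian) (r : ℝ) :
    ((r : ℂ) • H).IsHermitian := by
  unfold Matrix.IsHermitian
  rw [conjTranspose_smul, hH.eq]
  norm_num

lemma phi_matLog_herm (Φ : Matrix n n ℂ →ₗ[ℂ] Matrix n n ℂ)
    (hΦpos : ∀ A : Matrix n n ℂ, A.PosSemidef → (Φ A).PosSemidef)
    {σ : Matrix n n ℂ} (hσH : σ.IsHermitian) (f : ℝ → ℝ) :
    (Φ (matFun f σ)).IsHermitian := by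
  rw [matFun_eq_sum f hσH, map_sum]
  refine Finset.sum_induction _ _ (fun a b ha hb => ha.add hb) Matrix.isHermitian_zero ?_
  intro i _
  rw [LinearMap.map_smul]
  exact isHermitian_real_smul (hΦpos _ (sproj_posSemidef hσH i)).1 _

lemma pervector (Φ : Matrix n n ℂ →ₗ[ℂ] Matrix n n ℂ)
    (hΦpos : ∀ A : Matrix n n ℂ, A.PosSemidef → (Φ A).PosSemidef) (hΦ1 : Φ 1 = 1)
    {σ : Matrix n n ℂ} (hσ : σ.PosDef) (hB : (Φ σ).PosDef) (x : n → ℂ) :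
    (star x ⬝ᵥ (Φ (matLog σ)) *ᵥ x).re ≤ (star x ⬝ᵥ (matLog (Φ σ)) *ᵥ x).re := by
  have hσH : σ.IsHermitian := hσ.1
  have hBH : (Φ σ).IsHermitian := hB.1
  have hTpsd : ∀ i, (Φ (sproj hσH i)).PosSemidef := fun i => hΦpos _ (sproj_posSemidef hσH i)
  have hRpsd : ∀ k, (sproj hBH k).PosSemidef := fun k => sproj_posSemidef hBH k
  have hL : star x ⬝ᵥ (Φ (matLog σ)) *ᵥ x
      = ((∑ i, qf (Φ (sproj hσH i)) x * Real.log (hσH.eigenvalues i) : ℝ) : ℂ) := by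
    rw [matLog, matFun_eq_sum Real.log hσH, map_sum]
    have h1 : ∀ i : n, Φ ((Real.log (hσH.eigenvalues i) : ℂ) • sproj hσH i)
        = (Real.log (hσH.eigenvalues i) : ℂ) • Φ (sproj hσH i) := fun i => LinearMap.map_smul _ _ _
    simp only [h1]
    rw [dot_sum_smul x x _ _, Complex.ofReal_sum]
    refine Finset.sum_congr rfl fun i _ => ?_
    rw [dot_eq_qf (hTpsd i) x]
    push_cast
    ring
  have hR : star x ⬝ᵥ (matLog (Φ σ)) *ᵥ x
      = ((∑ k, qf (sproj hBH k) x * Real.log (hBH.eigenvalues k) : ℝ) : ℂ) := by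
    rw [matLog, matFun_eq_sum Real.log hBH]
    rw [dot_sum_smul x x _ _, Complex.ofReal_sum]
    refine Finset.sum_congr rfl fun k _ => ?_
    rw [dot_eq_qf (hRpsd k) x]
    push_cast
    ring
  rw [hL, hR, Complex.ofReal_re, Complex.ofReal_re]
  -- sums of weights agree
  have hsum : ∑ i, qf (Φ (sproj hσH i)) x = ∑ k, qf (sproj hBH k) x := by
    have h1 : ((∑ i, qf (Φ (sproj hσH i)) x : ℝ) : ℂ) = star x ⬝ᵥ (1 : Matrix n n ℂ) *ᵥ x := by
      rw [Complex.ofReal_sum, ← hΦ1, ← sum_sproj hσH, map_sum, dot_sum x x]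
      exact Finset.sum_congr rfl fun i _ => (dot_eq_qf (hTpsd i) x).symm
    have h2 : ((∑ k, qf (sproj hBH k) x : ℝ) : ℂ) = star x ⬝ᵥ (1 : Matrix n n ℂ) *ᵥ x := by
      rw [Complex.ofReal_sum, ← sum_sproj hBH, dot_sum x x]
      exact Finset.sum_congr rfl fun k _ => (dot_eq_qf (hRpsd k) x).symm
    exact_mod_cast h1.trans h2.symm
  exact scalar_key hσH.eigenvalues hBH.eigenvalues
    (fun i => qf (Φ (sproj hσH i)) x) (fun k => qf (sproj hBH k) x)
    (fun i => hσ.eigenvalues_pos i) (fun k => hB.eigenvalues_pos k)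
    hsum (fun l hl => lam_ineq Φ hΦpos hΦ1 hσ hB x l hl)

/-- The operator inequality Φ(log σ) ≤ log(Φ σ). -/
lemma key_op (Φ : Matrix n n ℂ →ₗ[ℂ] Matrix n n ℂ)
    (hΦpos : ∀ A : Matrix n n ℂ, A.PosSemidef → (Φ A).PosSemidef) (hΦ1 : Φ 1 = 1)
    {σ : Matrix n n ℂ} (hσ : σ.PosDef) (hB : (Φ σ).PosDef) :
    (matLog (Φ σ) - Φ (matLog σ)).PosSemidef := by
  have h1 : (matLog (Φ σ)).IsHermitian := matFun_herm Real.log hB.1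
  have h2 : (Φ (matLog σ)).IsHermitian := phi_matLog_herm Φ hΦpos hσ.1 Real.log
  have hherm : (matLog (Φ σ) - Φ (matLog σ)).IsHermitian := h1.sub h2
  refine PosSemidef.of_dotProduct_mulVec_nonneg hherm fun x => ?_
  rw [herm_dot_real hherm x]
  rw [Complex.nonneg_iff]
  constructor
  · rw [Complex.ofReal_re, Matrix.sub_mulVec, dotProduct_sub, Complex.sub_re]
    have := pervector Φ hΦpos hΦ1 hσ hB x
    linarith
  · rw [Complex.ofReal_im]

/-! ### trace positivity -/

lemma psd_diag_re_nonneg {C : Matrix n n ℂ} (hC : C.PosSemidef) (i : n) :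
    0 ≤ (C i i).re := by
  have h := hC.dotProduct_mulVec_nonneg (Pi.single i 1)
  rw [Complex.nonneg_iff] at h
  have h2 : star (Pi.single i (1:ℂ)) ⬝ᵥ C *ᵥ Pi.single i 1 = C i i := by
    have hs : star (Pi.single i (1:ℂ)) = (Pi.single i 1 : n → ℂ) := by
      funext j
      by_cases hj : j = i
      · subst hj; simp
      · simp [Pi.single_eq_of_ne hj]
    rw [hs, single_dotProduct, one_mul, Matrix.mulVec_single]
    simp
  rw [h2] at h
  exact h.1

open scoped MatrixOrder in
lemma trace_mul_psd_nonneg {ρ C : Matrix n n ℂ} (hρ : ρ.PosSemidef) (hC : C.PosSemidef) :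
    0 ≤ (Matrix.trace (ρ * C)).re := by
  have h1 : ρ * C = CFC.sqrt ρ * CFC.sqrt ρ * C := by rw [CFC.sqrt_mul_sqrt_self ρ hρ.nonneg]
  have h2 : Matrix.trace (CFC.sqrt ρ * C * CFC.sqrt ρ) = Matrix.trace (CFC.sqrt ρ * CFC.sqrt ρ * C) :=
    Matrix.trace_mul_cycle (CFC.sqrt ρ) C (CFC.sqrt ρ)
  have h3 : (CFC.sqrt ρ * C * CFC.sqrt ρ).PosSemidef := by
    have h4 := hC.mul_mul_conjTranspose_same (CFC.sqrt ρ)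
    rwa [(CFC.sqrt_nonneg ρ).posSemidef.1.eq] at h4
  rw [h1, ← h2, Matrix.trace, Complex.re_sum]
  exact Finset.sum_nonneg fun i _ => psd_diag_re_nonneg h3 i

end StmtAux

open StmtAux

theorem stmt_12 {n : Type*} [Fintype n] [DecidableEq n]
    (M : ℝ → (Matrix n n ℂ →ₗ[ℂ] Matrix n n ℂ))
    (hsemi : ∀ s t : ℝ, 0 ≤ s → 0 ≤ t → (M s) ∘ₗ (M t) = M (s + t))
    (hunital : ∀ t : ℝ, 0 ≤ t → M t 1 = 1)
    (hsa : ∀ t : ℝ, 0 ≤ t → ∀ X Y : Matrix n n ℂ,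
      Matrix.trace (Yᴴ * M t X) = Matrix.trace ((M t Y)ᴴ * X))
    (hpos : ∀ t : ℝ, 0 ≤ t → ∀ A : Matrix n n ℂ, A.PosSemidef → (M t A).PosSemidef)
    (hTP : ∀ t : ℝ, 0 ≤ t → ∀ A : Matrix n n ℂ, Matrix.trace (M t A) = Matrix.trace A)
    (ρ0 : Matrix n n ℂ) (hρ0 : ρ0.PosDef) (hρ01 : Matrix.trace ρ0 = 1)
    (hρt : ∀ t : ℝ, 0 ≤ t → (M t ρ0).PosDef)
    (t : ℝ) (ht : 0 ≤ t) :
    -(Matrix.trace (ρ0 * matLog (M (2 * t) ρ0))).re ≤ vnEntropy (M t ρ0) ∧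
      vnEntropy (M t ρ0) ≤ -(Matrix.trace ((M (2 * t) ρ0) * matLog ρ0)).re := by
  have h2t : (0:ℝ) ≤ 2 * t := by linarith
  have hΦpos : ∀ A : Matrix n n ℂ, A.PosSemidef → (M t A).PosSemidef := hpos t ht
  have hΦ1 : M t 1 = 1 := hunital t ht
  have hρtP : (M t ρ0).PosDef := hρt t ht
  have hcomp : M t (M t ρ0) = M (2 * t) ρ0 := by
    have h := hsemi t t ht ht
    calc M t (M t ρ0) = ((M t) ∘ₗ (M t)) ρ0 := rfl
      _ = M (t + t) ρ0 := by rw [h]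
      _ = M (2 * t) ρ0 := by rw [two_mul]
  have hρ2tP : (M t (M t ρ0)).PosDef := by rw [hcomp]; exact hρt _ h2t
  have hmove : ∀ X Y : Matrix n n ℂ, Y.PosSemidef →
      Matrix.trace (Y * M t X) = Matrix.trace ((M t Y) * X) := by
    intro X Y hY
    have h := hsa t ht X Y
    rwa [hY.1.eq, (hΦpos Y hY).1.eq] at h
  have key1 : (matLog (M t (M t ρ0)) - M t (matLog (M t ρ0))).PosSemidef :=
    key_op (M t) hΦpos hΦ1 hρtP hρ2tP
  have key2 : (matLog (M t ρ0) - M t (matLog ρ0)).PosSemidef :=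
    key_op (M t) hΦpos hΦ1 hρ0 hρtP
  constructor
  · -- lower bound
    simp only [vnEntropy]
    apply neg_le_neg
    have e3 := trace_mul_psd_nonneg hρ0.posSemidef key1
    rw [Matrix.mul_sub, Matrix.trace_sub, Complex.sub_re] at e3
    have e1 : Matrix.trace (ρ0 * M t (matLog (M t ρ0)))
        = Matrix.trace ((M t ρ0) * matLog (M t ρ0)) := hmove (matLog (M t ρ0)) ρ0 hρ0.posSemidef
    rw [e1, hcomp] at e3
    linarith
  · -- upper bound
    simp only [vnEntropy]
    apply neg_le_neg
    have e3 := trace_mul_psd_nonneg hρtP.posSemidef key2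
    rw [Matrix.mul_sub, Matrix.trace_sub, Complex.sub_re] at e3
    have e1 : Matrix.trace ((M t ρ0) * M t (matLog ρ0))
        = Matrix.trace ((M (2 * t) ρ0) * matLog ρ0) := by
      rw [hmove (matLog ρ0) (M t ρ0) hρtP.posSemidef, hcomp]
    rw [e1] at e3
    linarith
end

section
/- Under the same hypotheses (semigroup of unital, self-adjoint, positive, trace-preserving maps M_t, positive definite ρ_0 with ρ_t = M_t(ρ_0) > 0), the entropy change satisfies S(ρ_t) − S(ρ_0) ≥ D(ρ_0 ‖ ρ_{2t}). -/
open scoped Matrix Kronecker ComplexOrder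

namespace Scratch
variable {n : Type*} [Fintype n] [DecidableEq n]

noncomputable def sproj {A : Matrix n n ℂ} (hA : A.IsHermitian) (i : n) : Matrix n n ℂ :=
  (hA.eigenvectorUnitary : Matrix n n ℂ) * Matrix.diagonal (Pi.single i 1) *
    star (hA.eigenvectorUnitary : Matrix n n ℂ)

lemma sproj_posSemidef {A : Matrix n n ℂ} (hA : A.IsHermitian) (i : n) :
    (sproj hA i).PosSemidef := by
  have h : (Matrix.diagonal (Pi.single i 1 : n → ℂ)).PosSemidef := by
    refine Matrix.posSemidef_diagonal_iff.mpr fun j => ?_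
    rcases eq_or_ne j i with h | h <;> simp [Pi.single_apply, h]
  simpa [sproj, Matrix.star_eq_conjTranspose] using
    h.mul_mul_conjTranspose_same (hA.eigenvectorUnitary : Matrix n n ℂ)

lemma sum_sproj {A : Matrix n n ℂ} (hA : A.IsHermitian) :
    ∑ i, sproj hA i = 1 := by
  have h1 : ∑ i, Matrix.diagonal (Pi.single i 1 : n → ℂ) = 1 := by
    ext j k
    simp only [Matrix.sum_apply, Matrix.diagonal_apply, Matrix.one_apply, Pi.single_apply]
    rcases eq_or_ne j k with h | h <;> simp [h]
  have := (Matrix.mem_unitaryGroup_iff).mp (hA.eigenvectorUnitary).2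
  simp only [sproj, ← Finset.sum_mul, ← Finset.mul_sum, h1, mul_one]
  simpa using this

lemma sproj_mul_sproj {A : Matrix n n ℂ} (hA : A.IsHermitian) (i j : n) :
    sproj hA i * sproj hA j = if i = j then sproj hA i else 0 := by
  have hU : star (hA.eigenvectorUnitary : Matrix n n ℂ) *
      (hA.eigenvectorUnitary : Matrix n n ℂ) = 1 :=
    (Matrix.mem_unitaryGroup_iff').mp (hA.eigenvectorUnitary).2
  have : (fun k => (Pi.single i 1 : n → ℂ) k * (Pi.single j 1 : n → ℂ) k) =
      (if i = j then Pi.single i 1 else 0) := by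
    funext k
    rcases eq_or_ne i j with h | h <;>
      rcases eq_or_ne k i with h2 | h2 <;>
      rcases eq_or_ne k j with h3 | h3 <;>
      simp_all [Pi.single_apply]
  simp only [sproj, Matrix.mul_assoc]
  rw [← Matrix.mul_assoc (star _) ((hA.eigenvectorUnitary : Matrix n n ℂ)), hU, one_mul,
    ← Matrix.mul_assoc (Matrix.diagonal _), Matrix.diagonal_mul_diagonal, this]
  have hz : Matrix.diagonal (0 : n → ℂ) = 0 := by
    ext a b; simp [Matrix.diagonal_apply]
  rcases eq_or_ne i j with h | h <;> simp [h, Matrix.mul_assoc, hz, sproj]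


lemma diagonal_eq_sum {c : n → ℂ} :
    Matrix.diagonal c = ∑ i, c i • Matrix.diagonal (Pi.single i 1) := by
  ext j k
  simp only [Matrix.sum_apply, Matrix.smul_apply, Matrix.diagonal_apply, Pi.single_apply,
    smul_eq_mul]
  rcases eq_or_ne j k with h | h
  · subst h; simp [Finset.sum_ite_eq']
  · simp [h]

open Matrix in
lemma matFun_eq {A : Matrix n n ℂ} (hA : A.IsHermitian) (f : ℝ → ℝ) :
    matFun f A = ∑ i, (f (hA.eigenvalues i) : ℂ) • sproj hA i := by
  rw [matFun, dif_pos hA, diagonal_eq_sum]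
  rw [Finset.mul_sum, Finset.sum_mul]
  refine Finset.sum_congr rfl fun i _ => ?_
  simp [sproj, Matrix.mul_smul, Matrix.smul_mul]

lemma herm_eq_sum {A : Matrix n n ℂ} (hA : A.IsHermitian) :
    A = ∑ i, (hA.eigenvalues i : ℂ) • sproj hA i := by
  conv_lhs => rw [hA.spectral_theorem]
  rw [show Matrix.diagonal (RCLike.ofReal ∘ hA.eigenvalues) =
      Matrix.diagonal (fun i => ((hA.eigenvalues i : ℝ) : ℂ)) from rfl, diagonal_eq_sum]
  rw [Unitary.conjStarAlgAut_apply, Finset.mul_sum, Finset.sum_mul]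
  refine Finset.sum_congr rfl fun i _ => ?_
  simp [sproj, Matrix.mul_smul, Matrix.smul_mul]

lemma sum_smul_sproj_inv {A : Matrix n n ℂ} (hA : A.IsHermitian) (c : n → ℝ)
    (hc : ∀ i, c i ≠ 0) :
    (∑ i, (c i : ℂ) • sproj hA i)⁻¹ = ∑ i, (((c i)⁻¹ : ℝ) : ℂ) • sproj hA i := by
  refine Matrix.inv_eq_right_inv ?_
  rw [Finset.sum_mul]
  have : ∀ i ∈ Finset.univ, ((c i : ℂ) • sproj hA i) * ∑ j, (((c j)⁻¹ : ℝ) : ℂ) • sproj hA j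
      = ((c i : ℂ) * (((c i)⁻¹ : ℝ) : ℂ)) • sproj hA i := by
    intro i _
    rw [Finset.mul_sum]
    rw [Finset.sum_eq_single (M := Matrix n n ℂ) i]
    · rw [Matrix.smul_mul, Matrix.mul_smul, sproj_mul_sproj, if_pos rfl, smul_smul]
    · intro j _ hj
      simp [Matrix.smul_mul, Matrix.mul_smul, sproj_mul_sproj, (Ne.symm hj)]
    · simp
  rw [Finset.sum_congr rfl this]
  have : ∀ i ∈ Finset.univ, ((c i : ℂ) * (((c i)⁻¹ : ℝ) : ℂ)) • sproj hA i = sproj hA i := by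
    intro i _
    have : (c i : ℂ) * (((c i)⁻¹ : ℝ) : ℂ) = 1 := by
      push_cast
      exact mul_inv_cancel₀ (by exact_mod_cast hc i)
    rw [this, one_smul]
  rw [Finset.sum_congr rfl this, sum_sproj]


lemma posSemidef_add {A B : Matrix n n ℂ} (hA : A.PosSemidef) (hB : B.PosSemidef) :
    (A + B).PosSemidef := by
  refine .of_dotProduct_mulVec_nonneg (hA.1.add hB.1) fun x => ?_
  rw [Matrix.add_mulVec, dotProduct_add]
  exact add_nonneg (hA.dotProduct_mulVec_nonneg x) (hB.dotProduct_mulVec_nonneg x)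

lemma posSemidef_sum {ι : Type*} (s : Finset ι) (f : ι → Matrix n n ℂ)
    (h : ∀ i ∈ s, (f i).PosSemidef) : (∑ i ∈ s, f i).PosSemidef := by
  classical
  induction s using Finset.induction_on with
  | empty => simpa using Matrix.PosSemidef.zero
  | insert _ _ hx ih =>
    rw [Finset.sum_insert hx]
    exact posSemidef_add (h _ (Finset.mem_insert_self _ _))
      (ih fun i hi => h i (Finset.mem_insert_of_mem hi))

lemma posSemidef_real_smul {A : Matrix n n ℂ} (hA : A.PosSemidef) {c : ℝ} (hc : 0 ≤ c) :
    ((c : ℂ) • A).PosSemidef := by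
  refine .of_dotProduct_mulVec_nonneg ?_ fun x => ?_
  · rw [Matrix.IsHermitian, Matrix.conjTranspose_smul, hA.1.eq]
    norm_num
  · rw [Matrix.smul_mulVec, dotProduct_smul, smul_eq_mul]
    exact mul_nonneg (by exact_mod_cast hc) (hA.dotProduct_mulVec_nonneg x)

lemma isHermitian_sum_real_smul {ι : Type*} (s : Finset ι) (f : ι → Matrix n n ℂ)
    (c : ι → ℝ) (h : ∀ i ∈ s, (f i).IsHermitian) :
    (∑ i ∈ s, (c i : ℂ) • f i).IsHermitian := by
  classical
  induction s using Finset.induction_on with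
  | empty => simpa using Matrix.isHermitian_zero
  | insert _ _ hx ih =>
    rw [Finset.sum_insert hx]
    refine Matrix.IsHermitian.add ?_ (ih fun i hi => h i (Finset.mem_insert_of_mem hi))
    rw [Matrix.IsHermitian, Matrix.conjTranspose_smul, (h _ (Finset.mem_insert_self _ _)).eq]
    norm_num

lemma trace_psd_nonneg {A : Matrix n n ℂ} (hA : A.PosSemidef) : 0 ≤ A.trace := by
  rw [Matrix.trace]
  refine Finset.sum_nonneg fun i _ => ?_
  have := hA.dotProduct_mulVec_nonneg (Pi.single i 1)
  simpa [Matrix.mulVec_single, dotProduct, Pi.single_apply, Matrix.diag] using this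

open scoped MatrixOrder in
lemma trace_mul_psd_nonneg {A B : Matrix n n ℂ} (hA : A.PosSemidef) (hB : B.PosSemidef) :
    0 ≤ (A * B).trace := by
  have hs := CFC.sqrt_mul_sqrt_self A hA.nonneg
  have hh : (CFC.sqrt A).IsHermitian := (Matrix.nonneg_iff_posSemidef.mp (CFC.sqrt_nonneg A)).1
  have : A * B = CFC.sqrt A * (CFC.sqrt A * B) := by rw [← Matrix.mul_assoc, hs]
  rw [this, Matrix.trace_mul_comm]
  have : CFC.sqrt A * B * CFC.sqrt A = CFC.sqrt A * B * (CFC.sqrt A)ᴴ := by rw [hh.eq]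
  rw [Matrix.mul_assoc]
  rw [← Matrix.mul_assoc]
  rw [this]
  exact trace_psd_nonneg (hB.mul_mul_conjTranspose_same (CFC.sqrt A))

lemma re_nonneg_of_nonneg {z : ℂ} (h : 0 ≤ z) : 0 ≤ z.re := by
  rw [Complex.le_def] at h
  simpa using h.1


lemma block_psd {n : Type*} [Fintype n] [DecidableEq n] {Q : Matrix n n ℂ} (hQ : Q.PosSemidef) {l : ℝ} (hl : 0 < l) :
    (Matrix.fromBlocks ((l : ℂ) • Q) Q Q (((l⁻¹:ℝ) : ℂ) • Q)).PosSemidef := by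
  have hl0 : (l : ℂ) ≠ 0 := by exact_mod_cast hl.ne'
  refine .of_dotProduct_mulVec_nonneg ?_ ?_
  · rw [Matrix.IsHermitian, Matrix.fromBlocks_conjTranspose]
    rw [Matrix.conjTranspose_smul, Matrix.conjTranspose_smul, hQ.1.eq]
    norm_num
  · intro x
    have hx : x = Sum.elim (x ∘ Sum.inl) (x ∘ Sum.inr) := (Sum.elim_comp_inl_inr x).symm
    set a := x ∘ Sum.inl with ha
    set b := x ∘ Sum.inr with hb
    have key : star x ⬝ᵥ (Matrix.fromBlocks ((l : ℂ) • Q) Q Q (((l⁻¹:ℝ) : ℂ) • Q)) *ᵥ x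
        = star (a + ((l⁻¹:ℝ) : ℂ) • b) ⬝ᵥ ((l : ℂ) • Q) *ᵥ (a + ((l⁻¹:ℝ) : ℂ) • b) := by
      rw [hx]
      simp only [Function.star_sumElim, Matrix.fromBlocks_mulVec,
        sumElim_dotProduct_sumElim, Matrix.add_mulVec, Matrix.mulVec_add,
        Matrix.mulVec_smul, Matrix.smul_mulVec, dotProduct_add,
        add_dotProduct, dotProduct_smul, smul_dotProduct, Sum.elim_comp_inl, Sum.elim_comp_inr,
        star_add, star_smul, smul_eq_mul, Complex.star_def, Complex.conj_ofReal,
        map_inv₀]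
      push_cast
      field_simp
      ring
    rw [key]
    have : (((l : ℂ)) • Q).PosSemidef := by
      refine .of_dotProduct_mulVec_nonneg ?_ fun y => ?_
      · rw [Matrix.IsHermitian, Matrix.conjTranspose_smul, hQ.1.eq]; norm_num
      · rw [Matrix.smul_mulVec, dotProduct_smul, smul_eq_mul]
        exact mul_nonneg (by exact_mod_cast hl.le) (hQ.dotProduct_mulVec_nonneg y)
    exact this.dotProduct_mulVec_nonneg _


lemma choi (Φ : Matrix n n ℂ →ₗ[ℂ] Matrix n n ℂ)
    (hpos : ∀ A : Matrix n n ℂ, A.PosSemidef → (Φ A).PosSemidef)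
    (hone : Φ 1 = 1) {A : Matrix n n ℂ} (hA : A.PosDef) (hΦA : (Φ A).PosDef) :
    (Φ A⁻¹ - (Φ A)⁻¹).PosSemidef := by
  have hAh := hA.1
  have hlam : ∀ i, 0 < hAh.eigenvalues i := hA.eigenvalues_pos
  have hrepA : A = ∑ i, (hAh.eigenvalues i : ℂ) • sproj hAh i := herm_eq_sum hAh
  have hrepAinv : A⁻¹ = ∑ i, (((hAh.eigenvalues i)⁻¹ : ℝ) : ℂ) • sproj hAh i := by
    conv_lhs => rw [hrepA]
    exact sum_smul_sproj_inv hAh _ (fun i => (hlam i).ne')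
  have hΦrep : Φ A = ∑ i, (hAh.eigenvalues i : ℂ) • Φ (sproj hAh i) := by
    conv_lhs => rw [hrepA]
    simp [map_sum, map_smul]
  have hΦrepinv : Φ A⁻¹ = ∑ i, (((hAh.eigenvalues i)⁻¹ : ℝ) : ℂ) • Φ (sproj hAh i) := by
    rw [hrepAinv]
    simp [map_sum, map_smul]
  have hsumQ : (1 : Matrix n n ℂ) = ∑ i, Φ (sproj hAh i) := by
    rw [← map_sum, sum_sproj, hone]
  have hW : (Matrix.fromBlocks (Φ A) 1 1 (Φ A⁻¹)).PosSemidef := by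
    have heq : Matrix.fromBlocks (Φ A) 1 1 (Φ A⁻¹)
        = ∑ i, Matrix.fromBlocks ((hAh.eigenvalues i : ℂ) • Φ (sproj hAh i))
            (Φ (sproj hAh i)) (Φ (sproj hAh i))
            ((((hAh.eigenvalues i)⁻¹ : ℝ) : ℂ) • Φ (sproj hAh i)) := by
      rw [hΦrep, hΦrepinv]
      conv_lhs => rw [hsumQ]
      ext i j
      rcases i with i | i <;> rcases j with j | j <;>
        simp [Matrix.sum_apply]
    rw [heq]
    exact posSemidef_sum _ _ fun i _ =>
      block_psd (hpos _ (sproj_posSemidef hAh i)) (hlam i)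
  have hinv : Invertible (Φ A) := hΦA.isUnit.invertible
  have h11 := (Matrix.PosDef.fromBlocks₁₁ (1 : Matrix n n ℂ) (Φ A⁻¹) hΦA).mp
  have hW' : (Matrix.fromBlocks (Φ A) 1 (1 : Matrix n n ℂ)ᴴ (Φ A⁻¹)).PosSemidef := by
    rwa [Matrix.conjTranspose_one]
  simpa using h11 hW'


lemma trace_mul_sum_smul (ρ : Matrix n n ℂ) (c : n → ℝ) (X : n → Matrix n n ℂ) :
    (Matrix.trace (ρ * ∑ i, (c i : ℂ) • X i)).re
      = ∑ i, c i * (Matrix.trace (ρ * X i)).re := by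
  rw [Finset.mul_sum, Matrix.trace_sum, Complex.re_sum]
  refine Finset.sum_congr rfl fun i _ => ?_
  rw [Matrix.mul_smul, Matrix.trace_smul, smul_eq_mul, Complex.re_ofReal_mul]

lemma trace_mul_one_decomp (ρ : Matrix n n ℂ) (X : n → Matrix n n ℂ)
    (hX : ∑ i, X i = 1) :
    ∑ i, (Matrix.trace (ρ * X i)).re = (Matrix.trace ρ).re := by
  have : ∑ i, (Matrix.trace (ρ * X i)).re
      = (Matrix.trace (ρ * ∑ i, X i)).re := by
    rw [Finset.mul_sum, Matrix.trace_sum, Complex.re_sum]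
  rw [this, hX, mul_one]


open Filter Real in section


lemma integral_inv_shift {l T : ℝ} (hl : 0 < l) (hT : 0 ≤ T) :
    ∫ s in (0:ℝ)..T, (l + s)⁻¹ = Real.log (l + T) - Real.log l := by
  have h1 : ∀ s : ℝ, (l + s)⁻¹ = (fun u : ℝ => u⁻¹) (s + l) := fun s => by rw [add_comm]
  rw [intervalIntegral.integral_congr (g := fun s => (fun u : ℝ => u⁻¹) (s + l))
    (fun s _ => h1 s)]
  rw [intervalIntegral.integral_comp_add_right (fun u : ℝ => u⁻¹) l, zero_add]
  rw [integral_inv]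
  · rw [Real.log_div (by linarith) hl.ne', add_comm T l]
  · intro h
    rcases Set.mem_uIcc.mp h with ⟨h1, h2⟩ | ⟨h1, h2⟩ <;> linarith

lemma tendsto_log_ratio {l : ℝ} (hl : 0 < l) :
    Tendsto (fun T => Real.log (l + T) - Real.log (1 + T)) atTop (nhds 0) := by
  have h2 : Tendsto (fun T : ℝ => 1 + (l - 1) / (1 + T)) atTop (nhds 1) := by
    have := Filter.Tendsto.div_atTop (f := fun _ : ℝ => l - 1) (g := fun T : ℝ => 1 + T)
      (l := atTop) tendsto_const_nhds (tendsto_atTop_add_const_left _ 1 tendsto_id)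
    simpa using tendsto_const_nhds.add this
  have h3 : Tendsto (fun T : ℝ => Real.log (1 + (l - 1) / (1 + T))) atTop (nhds 0) := by
    have := (Real.continuousAt_log one_ne_zero).tendsto.comp h2
    simpa [Function.comp_def] using this
  refine h3.congr' ?_
  filter_upwards [eventually_gt_atTop (0:ℝ)] with T hT
  have hT1 : (0:ℝ) < 1 + T := by linarith
  have hlT : (0:ℝ) < l + T := by linarith
  rw [show 1 + (l - 1) / (1 + T) = (l + T) / (1 + T) by field_simp; ring,
    Real.log_div hlT.ne' hT1.ne']

end

open Filter in
set_option maxHeartbeats 2000000 in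
lemma key (Φ : Matrix n n ℂ →ₗ[ℂ] Matrix n n ℂ)
    (hpos : ∀ A : Matrix n n ℂ, A.PosSemidef → (Φ A).PosSemidef)
    (hone : Φ 1 = 1) {σ ρ : Matrix n n ℂ} (hσ : σ.PosDef) (hτ : (Φ σ).PosDef)
    (hρ : ρ.PosSemidef) :
    (Matrix.trace (ρ * Φ (matLog σ))).re ≤ (Matrix.trace (ρ * matLog (Φ σ))).re := by
  classical
  have hlam : ∀ i, 0 < hσ.1.eigenvalues i := hσ.eigenvalues_pos
  have hmu : ∀ j, 0 < hτ.1.eigenvalues j := hτ.eigenvalues_pos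
  set lam : n → ℝ := hσ.1.eigenvalues with hlam_def
  set mu : n → ℝ := hτ.1.eigenvalues with hmu_def
  set P : n → Matrix n n ℂ := sproj hσ.1 with hP_def
  set R : n → Matrix n n ℂ := sproj hτ.1 with hR_def
  set q : n → ℝ := fun i => (Matrix.trace (ρ * Φ (P i))).re with hq_def
  set r : n → ℝ := fun j => (Matrix.trace (ρ * R j)).re with hr_def
  have hq : ∀ i, 0 ≤ q i := fun i =>
    re_nonneg_of_nonneg (trace_mul_psd_nonneg hρ (hpos _ (sproj_posSemidef _ i)))
  have hr : ∀ j, 0 ≤ r j := fun j =>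
    re_nonneg_of_nonneg (trace_mul_psd_nonneg hρ (sproj_posSemidef _ j))
  -- LHS and RHS as sums
  have hLHS : (Matrix.trace (ρ * Φ (matLog σ))).re = ∑ i, Real.log (lam i) * q i := by
    have : Φ (matLog σ) = ∑ i, (Real.log (lam i) : ℂ) • Φ (P i) := by
      rw [matLog, matFun_eq hσ.1, map_sum]
      simp [map_smul]
      rfl
    rw [this, trace_mul_sum_smul]
  have hRHS : (Matrix.trace (ρ * matLog (Φ σ))).re = ∑ j, Real.log (mu j) * r j := by
    have : matLog (Φ σ) = ∑ j, (Real.log (mu j) : ℂ) • R j := by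
      rw [matLog, matFun_eq hτ.1]
    rw [this, trace_mul_sum_smul]
  -- sum of weights agree
  have hsum : ∑ i, q i = ∑ j, r j := by
    have h1 : ∑ i, q i = (Matrix.trace ρ).re := by
      refine trace_mul_one_decomp ρ _ ?_
      rw [← map_sum, sum_sproj, hone]
    have h2 : ∑ j, r j = (Matrix.trace ρ).re := by
      refine trace_mul_one_decomp ρ _ ?_
      exact sum_sproj hτ.1
    rw [h1, h2]
  -- pointwise nonnegativity of the integrand
  set F : ℝ → ℝ :=
    fun s => ∑ i, q i * (lam i + s)⁻¹ - ∑ j, r j * (mu j + s)⁻¹ with hF_def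
  have hF : ∀ s : ℝ, 0 ≤ s → 0 ≤ F s := by
    intro s hs
    have hone_psd : ((s : ℂ) • (1 : Matrix n n ℂ)).PosSemidef :=
      posSemidef_real_smul Matrix.PosSemidef.one hs
    set A : Matrix n n ℂ := σ + (s : ℂ) • 1 with hA_def
    have hA : A.PosDef := hσ.add_posSemidef hone_psd
    have hΦAeq : Φ A = Φ σ + (s : ℂ) • 1 := by
      rw [hA_def, map_add, map_smul, hone]
    have hΦA : (Φ A).PosDef := by
      rw [hΦAeq]; exact hτ.add_posSemidef hone_psd
    have hrepA : A = ∑ i, ((lam i + s : ℝ) : ℂ) • P i := by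
      rw [hA_def]
      conv_lhs => rw [herm_eq_sum hσ.1, show (1 : Matrix n n ℂ) = ∑ i, P i from (sum_sproj hσ.1).symm]
      rw [Finset.smul_sum, ← Finset.sum_add_distrib]
      refine Finset.sum_congr rfl fun i _ => ?_
      rw [← add_smul]
      norm_num
      rfl
    have hrepAinv : A⁻¹ = ∑ i, (((lam i + s)⁻¹ : ℝ) : ℂ) • P i := by
      conv_lhs => rw [hrepA]
      exact sum_smul_sproj_inv hσ.1 _ (fun i => (add_pos_of_pos_of_nonneg (hlam i) hs).ne')
    have hrepΦA : Φ A = ∑ j, ((mu j + s : ℝ) : ℂ) • R j := by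
      rw [hΦAeq]
      conv_lhs => rw [herm_eq_sum hτ.1, show (1 : Matrix n n ℂ) = ∑ j, R j from (sum_sproj hτ.1).symm]
      rw [Finset.smul_sum, ← Finset.sum_add_distrib]
      refine Finset.sum_congr rfl fun j _ => ?_
      rw [← add_smul]
      norm_num
      rfl
    have hrepΦAinv : (Φ A)⁻¹ = ∑ j, (((mu j + s)⁻¹ : ℝ) : ℂ) • R j := by
      conv_lhs => rw [hrepΦA]
      exact sum_smul_sproj_inv hτ.1 _ (fun j => (add_pos_of_pos_of_nonneg (hmu j) hs).ne')
    have hchoi := choi Φ hpos hone hA hΦA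
    have htr := re_nonneg_of_nonneg (trace_mul_psd_nonneg hρ hchoi)
    have hΦAinv : Φ A⁻¹ = ∑ i, (((lam i + s)⁻¹ : ℝ) : ℂ) • Φ (P i) := by
      rw [hrepAinv, map_sum]
      simp [map_smul]
    rw [Matrix.mul_sub, Matrix.trace_sub, Complex.sub_re, hΦAinv, hrepΦAinv,
      trace_mul_sum_smul, trace_mul_sum_smul] at htr
    have : ∀ c : n → ℝ, ∀ g : n → ℝ, ∑ i, (c i)⁻¹ * g i = ∑ i, g i * (c i)⁻¹ := by
      intro c g; exact Finset.sum_congr rfl fun i _ => mul_comm _ _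
    simpa [hF_def, this] using htr
  -- the integral of F up to T
  have hcont : ∀ (l : ℝ), 0 < l → ∀ T : ℝ, 0 ≤ T →
      IntervalIntegrable (fun s => (l + s)⁻¹) MeasureTheory.volume 0 T := by
    intro l hl T hT
    refine ContinuousOn.intervalIntegrable ?_
    refine ContinuousOn.inv₀ (continuousOn_const.add continuousOn_id) ?_
    intro x hx
    rw [Set.uIcc_of_le hT] at hx
    have := hx.1
    positivity
  have hint : ∀ T : ℝ, 0 ≤ T → ∫ s in (0:ℝ)..T, F s
      = (∑ i, q i * (Real.log (lam i + T) - Real.log (lam i)))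
        - ∑ j, r j * (Real.log (mu j + T) - Real.log (mu j)) := by
    intro T hT
    have hci : ∀ i : n, IntervalIntegrable (fun s => q i * (lam i + s)⁻¹)
        MeasureTheory.volume 0 T := fun i => (hcont (lam i) (hlam i) T hT).const_mul _
    have hcj : ∀ j : n, IntervalIntegrable (fun s => r j * (mu j + s)⁻¹)
        MeasureTheory.volume 0 T := fun j => (hcont (mu j) (hmu j) T hT).const_mul _
    have hsi : IntervalIntegrable (fun s => ∑ i, q i * (lam i + s)⁻¹)
        MeasureTheory.volume 0 T := by
      have := IntervalIntegrable.sum Finset.univ (fun i _ => hci i)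
      rwa [Finset.sum_fn] at this
    have hsj : IntervalIntegrable (fun s => ∑ j, r j * (mu j + s)⁻¹)
        MeasureTheory.volume 0 T := by
      have := IntervalIntegrable.sum Finset.univ (fun j _ => hcj j)
      rwa [Finset.sum_fn] at this
    have h1 : ∫ s in (0:ℝ)..T, ∑ i, q i * (lam i + s)⁻¹
        = ∑ i, q i * (Real.log (lam i + T) - Real.log (lam i)) := by
      rw [intervalIntegral.integral_finset_sum (fun i _ => hci i)]
      refine Finset.sum_congr rfl fun i _ => ?_
      rw [intervalIntegral.integral_const_mul, integral_inv_shift (hlam i) hT]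
    have h2 : ∫ s in (0:ℝ)..T, ∑ j, r j * (mu j + s)⁻¹
        = ∑ j, r j * (Real.log (mu j + T) - Real.log (mu j)) := by
      rw [intervalIntegral.integral_finset_sum (fun j _ => hcj j)]
      refine Finset.sum_congr rfl fun j _ => ?_
      rw [intervalIntegral.integral_const_mul, integral_inv_shift (hmu j) hT]
    rw [hF_def]
    rw [intervalIntegral.integral_sub hsi hsj, h1, h2]
  set target : ℝ := ∑ j, Real.log (mu j) * r j - ∑ i, Real.log (lam i) * q i with htarget_def
  -- tendsto
  have htendsto : Tendsto (fun T => ∫ s in (0:ℝ)..T, F s) atTop (nhds target) := by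
    have hh : Tendsto (fun T => (∑ i, q i * (Real.log (lam i + T) - Real.log (1 + T)))
        - ∑ j, r j * (Real.log (mu j + T) - Real.log (1 + T))) atTop (nhds 0) := by
      have h1 : Tendsto (fun T => ∑ i, q i * (Real.log (lam i + T) - Real.log (1 + T)))
          atTop (nhds 0) := by
        have := tendsto_finset_sum (Finset.univ : Finset n)
          (fun i _ => ((tendsto_log_ratio (hlam i)).const_mul (q i)))
        simpa using this
      have h2 : Tendsto (fun T => ∑ j, r j * (Real.log (mu j + T) - Real.log (1 + T)))
          atTop (nhds 0) := by
        have := tendsto_finset_sum (Finset.univ : Finset n)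
          (fun j _ => ((tendsto_log_ratio (hmu j)).const_mul (r j)))
        simpa using this
      simpa using h1.sub h2
    have heq : ∀ᶠ T in atTop, target
        + ((∑ i, q i * (Real.log (lam i + T) - Real.log (1 + T)))
          - ∑ j, r j * (Real.log (mu j + T) - Real.log (1 + T)))
        = ∫ s in (0:ℝ)..T, F s := by
      filter_upwards [eventually_ge_atTop (0:ℝ)] with T hT
      have expand2 : ∀ (g A B : n → ℝ), ∑ i, g i * (A i - B i)
          = (∑ i, g i * A i) - ∑ i, g i * B i := fun g A B => by
        rw [← Finset.sum_sub_distrib]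
        exact Finset.sum_congr rfl fun i _ => by ring
      have hcomm1 : ∑ i, Real.log (lam i) * q i = ∑ i, q i * Real.log (lam i) :=
        Finset.sum_congr rfl fun i _ => mul_comm _ _
      have hcomm2 : ∑ j, Real.log (mu j) * r j = ∑ j, r j * Real.log (mu j) :=
        Finset.sum_congr rfl fun j _ => mul_comm _ _
      have hmul' : ∑ i, q i * Real.log (1 + T) = ∑ j, r j * Real.log (1 + T) := by
        rw [← Finset.sum_mul, ← Finset.sum_mul, hsum]
      rw [hint T hT, htarget_def, expand2, expand2, expand2, expand2]
      linarith [hcomm1, hcomm2, hmul']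
    have := (tendsto_const_nhds (x := target)).add hh
    rw [add_zero] at this
    exact this.congr' heq
  -- conclude
  have htarget_nonneg : 0 ≤ target := by
    refine ge_of_tendsto htendsto ?_
    filter_upwards [eventually_ge_atTop (0:ℝ)] with T hT
    refine intervalIntegral.integral_nonneg hT fun s hs => hF s hs.1
  rw [hLHS, hRHS]
  linarith [htarget_nonneg]

lemma herm_shift {H : Matrix n n ℂ} (hH : H.IsHermitian) :
    (H + (((∑ i, |hH.eigenvalues i|) : ℝ) : ℂ) • 1).PosSemidef := by
  set c : ℝ := ∑ i, |hH.eigenvalues i| with hc_def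
  have hrep : H + (c : ℂ) • 1 = ∑ i, ((hH.eigenvalues i + c : ℝ) : ℂ) • sproj hH i := by
    conv_lhs => rw [herm_eq_sum hH,
      show (1 : Matrix n n ℂ) = ∑ i, sproj hH i from (sum_sproj hH).symm]
    rw [Finset.smul_sum, ← Finset.sum_add_distrib]
    refine Finset.sum_congr rfl fun i _ => ?_
    rw [← add_smul]
    norm_num
  rw [hrep]
  refine posSemidef_sum _ _ fun i _ => posSemidef_real_smul (sproj_posSemidef hH i) ?_
  have h1 : |hH.eigenvalues i| ≤ c :=
    Finset.single_le_sum (f := fun j => |hH.eigenvalues j|) (fun j _ => abs_nonneg _)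
      (Finset.mem_univ i)
  have := neg_abs_le (hH.eigenvalues i)
  linarith

lemma herm_pres (Φ : Matrix n n ℂ →ₗ[ℂ] Matrix n n ℂ)
    (hpos : ∀ A : Matrix n n ℂ, A.PosSemidef → (Φ A).PosSemidef)
    (hone : Φ 1 = 1) {X : Matrix n n ℂ} (hX : X.IsHermitian) :
    (Φ X).IsHermitian := by
  set c : ℝ := ∑ i, |hX.eigenvalues i| with hc_def
  have h1 : Φ X = Φ (X + (c : ℂ) • 1) - (c : ℂ) • 1 := by
    rw [map_add, map_smul, hone, add_sub_cancel_right]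
  rw [h1]
  refine Matrix.IsHermitian.sub (hpos _ (herm_shift hX)).1 ?_
  rw [Matrix.IsHermitian, Matrix.conjTranspose_smul, Matrix.conjTranspose_one]
  norm_num

end Scratch

open Scratch in
theorem stmt_13 {n : Type*} [Fintype n] [DecidableEq n]
    (M : ℝ → (Matrix n n ℂ →ₗ[ℂ] Matrix n n ℂ))
    (hsemi : ∀ s t : ℝ, 0 ≤ s → 0 ≤ t → (M s) ∘ₗ (M t) = M (s + t))
    (hunital : ∀ t : ℝ, 0 ≤ t → M t 1 = 1)
    (hsa : ∀ t : ℝ, 0 ≤ t → ∀ X Y : Matrix n n ℂ,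
      Matrix.trace (Yᴴ * M t X) = Matrix.trace ((M t Y)ᴴ * X))
    (hpos : ∀ t : ℝ, 0 ≤ t → ∀ A : Matrix n n ℂ, A.PosSemidef → (M t A).PosSemidef)
    (hTP : ∀ t : ℝ, 0 ≤ t → ∀ A : Matrix n n ℂ, Matrix.trace (M t A) = Matrix.trace A)
    (ρ0 : Matrix n n ℂ) (hρ0 : ρ0.PosDef) (hρ01 : Matrix.trace ρ0 = 1)
    (hρt : ∀ t : ℝ, 0 ≤ t → (M t ρ0).PosDef)
    (t : ℝ) (ht : 0 ≤ t) :
    vnEntropy (M t ρ0) - vnEntropy ρ0 ≥ relEnt ρ0 (M (2 * t) ρ0) := by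
  have h2t : (0:ℝ) ≤ 2 * t := by linarith
  set σ : Matrix n n ℂ := M t ρ0 with hσ_def
  have hσ : σ.PosDef := hρt t ht
  have hcomp : M t σ = M (2 * t) ρ0 := by
    have h := hsemi t t ht ht
    have h2 := congrArg (fun L : Matrix n n ℂ →ₗ[ℂ] Matrix n n ℂ => L ρ0) h
    simpa [two_mul] using h2
  have hτ : (M t σ).PosDef := by rw [hcomp]; exact hρt _ h2t
  have hlogσ : (matLog σ).IsHermitian := by
    rw [matLog, matFun_eq hσ.1]
    exact isHermitian_sum_real_smul _ _ _ (fun i _ => (sproj_posSemidef _ i).1)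
  have hherm : (M t (matLog σ)).IsHermitian :=
    herm_pres (M t) (hpos t ht) (hunital t ht) hlogσ
  have h1 : Matrix.trace (σ * matLog σ) = Matrix.trace (ρ0 * M t (matLog σ)) := by
    rw [Matrix.trace_mul_comm]
    calc Matrix.trace (matLog σ * σ) = Matrix.trace ((matLog σ)ᴴ * M t ρ0) := by
          rw [hlogσ.eq]
      _ = Matrix.trace ((M t (matLog σ))ᴴ * ρ0) := hsa t ht ρ0 (matLog σ)
      _ = Matrix.trace (M t (matLog σ) * ρ0) := by rw [hherm.eq]
      _ = Matrix.trace (ρ0 * M t (matLog σ)) := Matrix.trace_mul_comm _ _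
  have hkey := key (M t) (hpos t ht) (hunital t ht) hσ hτ hρ0.posSemidef
  rw [ge_iff_le, vnEntropy, vnEntropy, relEnt]
  have hrel : (Matrix.trace (ρ0 * (matLog ρ0 - matLog (M (2*t) ρ0)))).re
      = (Matrix.trace (ρ0 * matLog ρ0)).re
        - (Matrix.trace (ρ0 * matLog (M (2*t) ρ0))).re := by
    rw [Matrix.mul_sub, Matrix.trace_sub, Complex.sub_re]
  rw [hrel]
  have e2 : matLog (M (2*t) ρ0) = matLog (M t σ) := by rw [hcomp]
  rw [e2, h1]
  linarith
end

section
/- If a quantum channel E on a system A can be simulated as E(ρ) = F(ρ ⊗ θ) for a fixed positive trace-preserving sub-unital interaction map F on the joint system AC and fixed density matrix θ on C, then for every density matrix ρ > 0 with all relevant operators positive definite, S(E(ρ)) − S(ρ) ≥ S(θ). -/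
open scoped Matrix Kronecker ComplexOrder

open Matrix

lemma unitary_col_normSq {n : Type*} [Fintype n] [DecidableEq n]
    {M : Matrix n n ℂ} (hM : M ∈ Matrix.unitaryGroup n ℂ) (j : n) :
    ∑ i, Complex.normSq (M i j) = 1 := by
  have h := mem_unitaryGroup_iff'.mp hM
  have h2 := congrFun (congrFun h j) j
  simp only [Matrix.mul_apply, Matrix.one_apply_eq, Matrix.star_apply, star] at h2
  have : ((∑ i, Complex.normSq (M i j) : ℝ) : ℂ) = 1 := by
    push_cast
    rw [← h2]
    exact Finset.sum_congr rfl fun i _ => by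
      rw [Complex.normSq_eq_conj_mul_self, Matrix.conjTranspose_apply, Complex.star_def]
  exact_mod_cast this

lemma unitary_row_normSq {n : Type*} [Fintype n] [DecidableEq n]
    {M : Matrix n n ℂ} (hM : M ∈ Matrix.unitaryGroup n ℂ) (i : n) :
    ∑ j, Complex.normSq (M i j) = 1 := by
  have h := mem_unitaryGroup_iff.mp hM
  have h2 := congrFun (congrFun h i) i
  simp only [Matrix.mul_apply, Matrix.one_apply_eq, Matrix.star_apply, star] at h2
  have : ((∑ j, Complex.normSq (M i j) : ℝ) : ℂ) = 1 := by
    push_cast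
    rw [← h2]
    exact Finset.sum_congr rfl fun j _ => by
      rw [Complex.normSq_eq_conj_mul_self, Matrix.conjTranspose_apply, Complex.star_def]; ring
  exact_mod_cast this

lemma sum_fun_eigen_eq {n : Type*} [Fintype n] [DecidableEq n]
    {V W : Matrix n n ℂ} (hV : V ∈ Matrix.unitaryGroup n ℂ) (hW : W ∈ Matrix.unitaryGroup n ℂ)
    (d e : n → ℝ)
    (h : V * Matrix.diagonal (fun i => (d i : ℂ)) * star V
       = W * Matrix.diagonal (fun i => (e i : ℂ)) * star W)
    (g : ℝ → ℝ) : ∑ i, g (d i) = ∑ i, g (e i) := by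
  set M : Matrix n n ℂ := star W * V with hMdef
  have hM : M ∈ Matrix.unitaryGroup n ℂ := mul_mem (Unitary.star_mem hW) hV
  have hWW : star W * W = 1 := mem_unitaryGroup_iff'.mp hW
  have hVV : star V * V = 1 := mem_unitaryGroup_iff'.mp hV
  have key : M * Matrix.diagonal (fun i => (d i : ℂ)) = Matrix.diagonal (fun i => (e i : ℂ)) * M := by
    have h2 := congrArg (fun X => star W * X * V) h
    calc M * Matrix.diagonal (fun i => (d i : ℂ))
        = star W * (V * Matrix.diagonal (fun i => (d i : ℂ)) * star V) * V := by
          rw [hMdef]; simp only [Matrix.mul_assoc]; rw [hVV, Matrix.mul_one]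
      _ = star W * (W * Matrix.diagonal (fun i => (e i : ℂ)) * star W) * V := by rw [h]
      _ = Matrix.diagonal (fun i => (e i : ℂ)) * M := by
          rw [hMdef]; simp only [Matrix.mul_assoc]; rw [← Matrix.mul_assoc (star W) W, hWW, Matrix.one_mul]
  have hentry : ∀ i j, Complex.normSq (M i j) * g (d j) = Complex.normSq (M i j) * g (e i) := by
    intro i j
    by_cases hz : M i j = 0
    · simp [hz]
    · have := congrFun (congrFun key i) j
      rw [Matrix.mul_diagonal, Matrix.diagonal_mul] at this
      rw [mul_comm] at this
      have hde : (d j : ℂ) = (e i : ℂ) := mul_left_cancel₀ hz (by rw [mul_comm (M i j), this, mul_comm])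
      rw [show d j = e i from by exact_mod_cast hde]
  calc ∑ j, g (d j) = ∑ j, (∑ i, Complex.normSq (M i j)) * g (d j) := by
        simp [unitary_col_normSq hM]
    _ = ∑ j, ∑ i, Complex.normSq (M i j) * g (d j) := by simp [Finset.sum_mul]
    _ = ∑ j, ∑ i, Complex.normSq (M i j) * g (e i) :=
        Finset.sum_congr rfl fun j _ => Finset.sum_congr rfl fun i _ => hentry i j
    _ = ∑ i, ∑ j, Complex.normSq (M i j) * g (e i) := Finset.sum_comm
    _ = ∑ i, g (e i) := by
        refine Finset.sum_congr rfl fun i _ => ?_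
        rw [← Finset.sum_mul, unitary_row_normSq hM, one_mul]

lemma vnEntropy_eq_sum {n : Type*} [Fintype n] [DecidableEq n]
    {τ : Matrix n n ℂ} (hτ : τ.IsHermitian) :
    vnEntropy τ = ∑ i, Real.negMulLog (hτ.eigenvalues i) := by
  set U : Matrix n n ℂ := (hτ.eigenvectorUnitary : Matrix n n ℂ) with hUdef
  have hUU : star U * U = 1 := mem_unitaryGroup_iff'.mp hτ.eigenvectorUnitary.2
  have h1 : τ = U * diagonal (RCLike.ofReal ∘ hτ.eigenvalues) * star U := hτ.spectral_theorem
  have hlog : matLog τ = U * diagonal (fun i => (Real.log (hτ.eigenvalues i) : ℂ)) * star U := by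
    rw [matLog, matFun, dif_pos hτ]
  have key : τ * matLog τ
      = U * diagonal (fun i => ((hτ.eigenvalues i * Real.log (hτ.eigenvalues i) : ℝ) : ℂ)) * star U := by
    have key0 := congrArg (fun X : Matrix n n ℂ =>
      X * (U * diagonal (fun i => (Real.log (hτ.eigenvalues i) : ℂ)) * star U)) h1
    rw [← hlog] at key0
    rw [key0, hlog]
    simp only [Matrix.mul_assoc]
    rw [show star U * (U * (diagonal (fun i => (Real.log (hτ.eigenvalues i) : ℂ)) * star U))
        = diagonal (fun i => (Real.log (hτ.eigenvalues i) : ℂ)) * star U from by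
      rw [← Matrix.mul_assoc, hUU, Matrix.one_mul]]
    congr 1
    rw [← Matrix.mul_assoc, diagonal_mul_diagonal]
    congr 1
    ext i
    push_cast
    rfl
  rw [vnEntropy, key, Matrix.trace_mul_cycle, hUU, Matrix.one_mul, Matrix.trace_diagonal]
  rw [Complex.re_sum, ← Finset.sum_neg_distrib]
  exact Finset.sum_congr rfl fun i _ => by simp [Real.negMulLog]

lemma jensen_sub {J : Type*} [Fintype J] (w x : J → ℝ) (hw : ∀ j, 0 ≤ w j)
    (hws : ∑ j, w j ≤ 1) (hx : ∀ j, 0 ≤ x j) :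
    ∑ j, w j * Real.negMulLog (x j) ≤ Real.negMulLog (∑ j, w j * x j) := by
  classical
  set w' : Option J → ℝ := fun o => o.elim (1 - ∑ j, w j) w with hw'
  set x' : Option J → ℝ := fun o => o.elim 0 x with hx'
  have h := Real.concaveOn_negMulLog.le_map_sum (t := Finset.univ) (w := w') (p := x')
    (fun o _ => by cases o <;> simp [hw', sub_nonneg.mpr hws, hw _])
    (by rw [Fintype.sum_option]; simp [hw'])
    (fun o _ => by cases o <;> simp [hx', Set.mem_Ici, hx _])
  rw [Fintype.sum_option, Fintype.sum_option] at h
  simpa [hw', hx', smul_eq_mul] using h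

lemma psd_apply_nonneg {n : Type*} [Fintype n] [DecidableEq n]
    {M : Matrix n n ℂ} (hM : M.PosSemidef) (i : n) :
    0 ≤ (M i i).re ∧ (M i i).im = 0 := by
  have := hM.dotProduct_mulVec_nonneg (Pi.single i 1)
  simp [Matrix.mulVec_single, dotProduct, Pi.single_apply] at this
  rw [Complex.le_def] at this
  simp at this
  exact ⟨this.1, this.2.symm⟩

lemma vnEntropy_le_apply {n m : Type*} [Fintype n] [DecidableEq n] [Fintype m] [DecidableEq m]
    (Φ : Matrix n n ℂ →ₗ[ℂ] Matrix m m ℂ)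
    (hpos : ∀ ω : Matrix n n ℂ, ω.PosSemidef → (Φ ω).PosSemidef)
    (hTP : ∀ ω : Matrix n n ℂ, (Φ ω).trace = ω.trace)
    (hsub : ((1 : Matrix m m ℂ) - Φ 1).PosSemidef)
    {ω : Matrix n n ℂ} (hω : ω.PosSemidef) :
    vnEntropy ω ≤ vnEntropy (Φ ω) := by
  classical
  have hωh : ω.IsHermitian := hω.1
  set U : Matrix n n ℂ := (hωh.eigenvectorUnitary : Matrix n n ℂ) with hUdef
  have hUU : star U * U = 1 := mem_unitaryGroup_iff'.mp hωh.eigenvectorUnitary.2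
  have hUU' : U * star U = 1 := mem_unitaryGroup_iff.mp hωh.eigenvectorUnitary.2
  set lam : n → ℝ := hωh.eigenvalues with hlamdef
  have hlamnn : ∀ j, 0 ≤ lam j := hω.eigenvalues_nonneg
  set Dj : n → Matrix n n ℂ := fun j => diagonal (fun k => if k = j then (1:ℂ) else 0) with hDjdef
  set Q : n → Matrix n n ℂ := fun j => U * Dj j * star U with hQdef
  have hDjmul : ∀ j, Dj j * Dj j = Dj j := by
    intro j
    rw [hDjdef]
    simp only [diagonal_mul_diagonal]
    have : (fun k => (if k = j then (1:ℂ) else 0) * (if k = j then (1:ℂ) else 0))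
        = fun k => if k = j then (1:ℂ) else 0 := by
      funext k; by_cases h : k = j <;> simp [h]
    rw [this]
  have hDjherm : ∀ j, (Dj j)ᴴ = Dj j := by
    intro j
    rw [hDjdef]
    simp only [diagonal_conjTranspose]
    have : (star fun k => if k = j then (1:ℂ) else 0) = fun k => if k = j then (1:ℂ) else 0 := by
      funext k; by_cases h : k = j <;> simp [h, Pi.star_apply]
    rw [this]
  have hQpsd : ∀ j, (Q j).PosSemidef := by
    intro j
    have : Q j = (U * Dj j) * (U * Dj j)ᴴ := by
      rw [conjTranspose_mul, hDjherm, ← Matrix.star_eq_conjTranspose U, Matrix.mul_assoc,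
        ← Matrix.mul_assoc (Dj j), hDjmul, hQdef]
      simp [Matrix.mul_assoc]
    rw [this]
    exact posSemidef_self_mul_conjTranspose _
  have hQsum : ∑ j, Q j = 1 := by
    have h1 : ∑ j, Dj j = 1 := by
      rw [hDjdef]
      ext k l
      simp only [Matrix.sum_apply, Matrix.diagonal_apply]
      by_cases h : k = l
      · subst h; simp
      · simp [h]
    calc ∑ j, Q j = U * (∑ j, Dj j) * star U := by
          rw [Finset.mul_sum, Finset.sum_mul]
      _ = 1 := by rw [h1, Matrix.mul_one, hUU']
  have hdecomp : ω = ∑ j, (lam j : ℂ) • Q j := by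
    have h2 : diagonal (RCLike.ofReal ∘ lam) = ∑ j, (lam j : ℂ) • Dj j := by
      rw [hDjdef]
      ext k l
      simp only [Matrix.sum_apply, Matrix.smul_apply, Matrix.diagonal_apply, smul_eq_mul]
      by_cases h : k = l
      · subst h; simp
      · simp [h]
    calc ω = U * diagonal (RCLike.ofReal ∘ lam) * star U := hωh.spectral_theorem
      _ = ∑ j, (lam j : ℂ) • Q j := by
          rw [h2, Finset.mul_sum, Finset.sum_mul]
          exact Finset.sum_congr rfl fun j _ => by
            rw [Matrix.mul_smul, Matrix.smul_mul, hQdef]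
  have hΦω : Φ ω = ∑ j, (lam j : ℂ) • Φ (Q j) := by
    conv_lhs => rw [hdecomp]
    rw [map_sum]
    exact Finset.sum_congr rfl fun j _ => Φ.map_smul _ _
  have hΦωpsd : (Φ ω).PosSemidef := hpos ω hω
  have hΦh : (Φ ω).IsHermitian := hΦωpsd.1
  set V : Matrix m m ℂ := (hΦh.eigenvectorUnitary : Matrix m m ℂ) with hVdef
  have hVV : star V * V = 1 := mem_unitaryGroup_iff'.mp hΦh.eigenvectorUnitary.2
  have hVV' : V * star V = 1 := mem_unitaryGroup_iff.mp hΦh.eigenvectorUnitary.2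
  set mu : m → ℝ := hΦh.eigenvalues with hmudef
  have hdiag : star V * Φ ω * V = diagonal (RCLike.ofReal ∘ mu) :=
    by have := hΦh.conjStarAlgAut_star_eigenvectorUnitary
       simpa [Unitary.conjStarAlgAut_star_apply, hVdef, hmudef] using this
  set Dmat : m → n → ℝ := fun i j => ((star V * Φ (Q j) * V) i i).re with hDmatdef
  have hzpsd : ∀ j, (star V * Φ (Q j) * V).PosSemidef := by
    intro j
    have := (hpos _ (hQpsd j)).conjTranspose_mul_mul_same V
    rwa [← Matrix.star_eq_conjTranspose] at this
  have hDnn : ∀ i j, 0 ≤ Dmat i j := fun i j => (psd_apply_nonneg (hzpsd j) i).1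
  have hmu : ∀ i, mu i = ∑ j, lam j * Dmat i j := by
    intro i
    have h0 := congrFun (congrFun hdiag i) i
    rw [hΦω, Finset.mul_sum, Finset.sum_mul] at h0
    simp only [Matrix.mul_smul, Matrix.smul_mul, Matrix.sum_apply, Matrix.smul_apply,
      Matrix.diagonal_apply_eq, Function.comp_apply, smul_eq_mul] at h0
    have h1 := congrArg Complex.re h0.symm
    simp only [show ∀ x : ℝ, (RCLike.ofReal x : ℂ) = Complex.ofReal x from fun _ => rfl,
      Complex.re_sum, Complex.ofReal_re] at h1
    rw [h1]
    exact Finset.sum_congr rfl fun j _ => by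
      rw [Complex.mul_re, Complex.ofReal_re, Complex.ofReal_im]
      simp [hDmatdef]
  have hcol : ∀ j, ∑ i, Dmat i j = 1 := by
    intro j
    have htr : (star V * Φ (Q j) * V).trace = (1 : ℂ) := by
      rw [Matrix.trace_mul_cycle, hVV', Matrix.one_mul, hTP]
      simp only [hQdef, hDjdef]
      rw [Matrix.trace_mul_cycle, hUU, Matrix.one_mul, Matrix.trace_diagonal]
      simp
    have := congrArg Complex.re htr
    rw [Matrix.trace, Complex.re_sum] at this
    simpa [Matrix.diag, hDmatdef] using this
  have hrow : ∀ i, ∑ j, Dmat i j ≤ 1 := by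
    intro i
    have hsum1 : ∑ j, star V * Φ (Q j) * V = star V * Φ 1 * V := by
      rw [← Finset.sum_mul, ← Finset.mul_sum, ← map_sum, hQsum]
    have hpsd2 : (star V * ((1 : Matrix m m ℂ) - Φ 1) * V).PosSemidef := by
      have := hsub.conjTranspose_mul_mul_same V
      rwa [← Matrix.star_eq_conjTranspose] at this
    have hkey := (psd_apply_nonneg hpsd2 i).1
    rw [Matrix.mul_sub, Matrix.sub_mul, Matrix.mul_one, hVV] at hkey
    simp only [Matrix.sub_apply, Complex.sub_re, Matrix.one_apply_eq, Complex.one_re] at hkey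
    have : ∑ j, Dmat i j = ((star V * Φ 1 * V) i i).re := by
      rw [← hsum1]
      simp [hDmatdef, Matrix.sum_apply, Complex.re_sum]
    rw [this]
    linarith
  rw [vnEntropy_eq_sum hωh, vnEntropy_eq_sum hΦh]
  calc ∑ j, Real.negMulLog (lam j)
      = ∑ j, (∑ i, Dmat i j) * Real.negMulLog (lam j) := by
        refine Finset.sum_congr rfl fun j _ => ?_
        rw [hcol j, one_mul]
    _ = ∑ j, ∑ i, Dmat i j * Real.negMulLog (lam j) := by
        simp [Finset.sum_mul]
    _ = ∑ i, ∑ j, Dmat i j * Real.negMulLog (lam j) := Finset.sum_comm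
    _ ≤ ∑ i, Real.negMulLog (mu i) := by
        refine Finset.sum_le_sum fun i _ => ?_
        have := jensen_sub (fun j => Dmat i j) lam (hDnn i) (hrow i) hlamnn
        have hmui : ∑ j, Dmat i j * lam j = mu i := by
          rw [hmu i]
          exact Finset.sum_congr rfl fun j _ => mul_comm _ _
        rwa [hmui] at this

lemma star_kron {a b : Type*} [Fintype a] [Fintype b] [DecidableEq a] [DecidableEq b]
    (P : Matrix a a ℂ) (Q : Matrix b b ℂ) : star (P ⊗ₖ Q) = star P ⊗ₖ star Q := by
  ext ⟨i, j⟩ ⟨k, l⟩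
  simp [Matrix.star_eq_conjTranspose, Matrix.conjTranspose_apply, Matrix.kroneckerMap_apply]

lemma kron_mem_unitary {a b : Type*} [Fintype a] [Fintype b] [DecidableEq a] [DecidableEq b]
    {P : Matrix a a ℂ} {Q : Matrix b b ℂ} (hP : P ∈ Matrix.unitaryGroup a ℂ)
    (hQ : Q ∈ Matrix.unitaryGroup b ℂ) : P ⊗ₖ Q ∈ Matrix.unitaryGroup (a × b) ℂ := by
  rw [mem_unitaryGroup_iff']
  rw [star_kron, ← Matrix.mul_kronecker_mul, mem_unitaryGroup_iff'.mp hP,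
    mem_unitaryGroup_iff'.mp hQ, Matrix.one_kronecker_one]

lemma sum_eigenvalues_eq_one {n : Type*} [Fintype n] [DecidableEq n]
    {τ : Matrix n n ℂ} (hτ : τ.IsHermitian) (h1 : τ.trace = 1) :
    ∑ i, hτ.eigenvalues i = 1 := by
  have h2 := congrArg Matrix.trace (show τ = (hτ.eigenvectorUnitary : Matrix n n ℂ) *
    diagonal (RCLike.ofReal ∘ hτ.eigenvalues) * star (hτ.eigenvectorUnitary : Matrix n n ℂ) from
    hτ.spectral_theorem)
  rw [h1, Matrix.trace_mul_cycle, mem_unitaryGroup_iff'.mp hτ.eigenvectorUnitary.2,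
    Matrix.one_mul, Matrix.trace_diagonal] at h2
  have h3 : (1 : ℂ) = ((∑ i, hτ.eigenvalues i : ℝ) : ℂ) := by
    rw [h2]
    push_cast
    rfl
  exact_mod_cast h3.symm

lemma vnEntropy_kron {a c : Type*} [Fintype a] [DecidableEq a] [Fintype c] [DecidableEq c]
    {ρ : Matrix a a ℂ} {θ : Matrix c c ℂ} (hρh : ρ.IsHermitian) (hθh : θ.IsHermitian)
    (hω : (ρ ⊗ₖ θ).IsHermitian) (hρ1 : ρ.trace = 1) (hθ1 : θ.trace = 1) :
    vnEntropy (ρ ⊗ₖ θ) = vnEntropy ρ + vnEntropy θ := by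
  set U : Matrix a a ℂ := (hρh.eigenvectorUnitary : Matrix a a ℂ)
  set W : Matrix c c ℂ := (hθh.eigenvectorUnitary : Matrix c c ℂ)
  set lam : a → ℝ := hρh.eigenvalues
  set mu : c → ℝ := hθh.eigenvalues
  have hk : ρ ⊗ₖ θ = (U ⊗ₖ W) * Matrix.diagonal (fun p : a × c => ((lam p.1 * mu p.2 : ℝ) : ℂ))
      * star (U ⊗ₖ W) := by
    calc ρ ⊗ₖ θ = (U * Matrix.diagonal (RCLike.ofReal ∘ lam) * star U)
          ⊗ₖ (W * Matrix.diagonal (RCLike.ofReal ∘ mu) * star W) := by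
          rw [← (show ρ = U * Matrix.diagonal (RCLike.ofReal ∘ lam) * star U from hρh.spectral_theorem),
            ← (show θ = W * Matrix.diagonal (RCLike.ofReal ∘ mu) * star W from hθh.spectral_theorem)]
      _ = (U ⊗ₖ W) * (Matrix.diagonal (RCLike.ofReal ∘ lam) ⊗ₖ Matrix.diagonal (RCLike.ofReal ∘ mu))
          * (star U ⊗ₖ star W) := by
          rw [Matrix.mul_kronecker_mul, Matrix.mul_kronecker_mul]
      _ = (U ⊗ₖ W) * Matrix.diagonal (fun p : a × c => ((lam p.1 * mu p.2 : ℝ) : ℂ))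
          * star (U ⊗ₖ W) := by
          rw [star_kron, Matrix.diagonal_kronecker_diagonal]
          congr 2
          funext p
          push_cast
          rfl
  have h1 : ∑ k, Real.negMulLog (hω.eigenvalues k)
      = ∑ p : a × c, Real.negMulLog (lam p.1 * mu p.2) := by
    apply sum_fun_eigen_eq hω.eigenvectorUnitary.2 (kron_mem_unitary hρh.eigenvectorUnitary.2
      hθh.eigenvectorUnitary.2)
    calc (hω.eigenvectorUnitary : Matrix (a × c) (a × c) ℂ)
          * Matrix.diagonal (fun i => (hω.eigenvalues i : ℂ))
          * star (hω.eigenvectorUnitary : Matrix (a × c) (a × c) ℂ) = ρ ⊗ₖ θ :=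
        hω.spectral_theorem.symm
      _ = _ := hk
  rw [vnEntropy_eq_sum hω, vnEntropy_eq_sum hρh, vnEntropy_eq_sum hθh, h1]
  have hsl : ∑ i, lam i = 1 := sum_eigenvalues_eq_one hρh hρ1
  have hsm : ∑ j, mu j = 1 := sum_eigenvalues_eq_one hθh hθ1
  rw [Fintype.sum_prod_type]
  calc ∑ i, ∑ j, Real.negMulLog (lam i * mu j)
      = ∑ i, ∑ j, (mu j * Real.negMulLog (lam i) + lam i * Real.negMulLog (mu j)) := by
        refine Finset.sum_congr rfl fun i _ => Finset.sum_congr rfl fun j _ => ?_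
        rw [Real.negMulLog_mul]
    _ = (∑ i, Real.negMulLog (lam i)) + ∑ j, Real.negMulLog (mu j) := by
        have e1 : ∀ i, ∑ j, (mu j * Real.negMulLog (lam i) + lam i * Real.negMulLog (mu j))
            = Real.negMulLog (lam i) + lam i * ∑ j, Real.negMulLog (mu j) := by
          intro i
          rw [Finset.sum_add_distrib, ← Finset.sum_mul, hsm, one_mul, ← Finset.mul_sum]
        simp only [e1]
        rw [Finset.sum_add_distrib, ← Finset.sum_mul, hsl, one_mul]


theorem stmt_16 {A B C : Type*} [Fintype A] [DecidableEq A] [Fintype B] [DecidableEq B]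
    [Fintype C] [DecidableEq C]
    (F : Matrix (A × C) (A × C) ℂ →ₗ[ℂ] Matrix B B ℂ)
    (E : Matrix A A ℂ → Matrix B B ℂ)
    (θ : Matrix C C ℂ) (hθ : θ.PosDef) (hθ1 : Matrix.trace θ = 1)
    (hE : ∀ ρ : Matrix A A ℂ, E ρ = F (ρ ⊗ₖ θ))
    (hFpos : ∀ ω : Matrix (A × C) (A × C) ℂ, ω.PosSemidef → (F ω).PosSemidef)
    (hFTP : ∀ ω : Matrix (A × C) (A × C) ℂ, Matrix.trace (F ω) = Matrix.trace ω)
    (hFsub : ((1 : Matrix B B ℂ) - F 1).PosSemidef)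
    (ρ : Matrix A A ℂ) (hρ : ρ.PosDef) (hρ1 : Matrix.trace ρ = 1)
    (hωpd : (ρ ⊗ₖ θ).PosDef) (hEρ : (E ρ).PosDef) :
    vnEntropy (E ρ) - vnEntropy ρ ≥ vnEntropy θ := by
  have hωpsd := hωpd.posSemidef
  have hadd := vnEntropy_kron hρ.1 hθ.1 hωpd.1 hρ1 hθ1
  have hmono := vnEntropy_le_apply F hFpos hFTP hFsub hωpsd
  rw [hE ρ]
  linarith [hmono, hadd]
end
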